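/- arXiv:1304.1562 — 9 statements merged into one kernel-verified Lean document; each statement's English description precedes it below -/
import Mathlib

section
/- Let a, b₁, b₂ : [0,∞) → ℝ be continuous and uniformly bounded with b₁(t) ≤ b₂(t) for all t, and suppose a(t) ≥ a₀ for some constant a₀ > 0. If A₀ > sup_{t≥0} b₂(t), then the solution of the Riccati equation dA/dt = a(t) (A − b₁(t)) (A − b₂(t)), A(0) = A₀, blows up in finite time; in particular, there is no differentiable function A : [0,∞) → ℝ satisfying this equation on all of [0,∞) with A(0) = A₀. -/
open Set

/-- Let `a, b₁, b₂ : [0,∞) → ℝ` be continuous and uniformly bounded with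
`b₁(t) ≤ b₂(t)` and `a(t) ≥ a₀ > 0`. If `A₀ > sup_{t ≥ 0} b₂(t)`, then the solution of the
Riccati equation `dA/dt = a(t)(A − b₁(t))(A − b₂(t))`, `A(0) = A₀`, blows up in finite time;
in particular there is no differentiable `A : [0,∞) → ℝ` satisfying it on all of `[0,∞)`. -/
theorem riccati_blowup
    (a b₁ b₂ : ℝ → ℝ) (a₀ : ℝ) (ha₀ : 0 < a₀)
    (hacont : ContinuousOn a (Ici 0)) (hb₁cont : ContinuousOn b₁ (Ici 0))
    (hb₂cont : ContinuousOn b₂ (Ici 0))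
    (hbdd : ∃ C, ∀ t ∈ Ici (0 : ℝ), |a t| ≤ C ∧ |b₁ t| ≤ C ∧ |b₂ t| ≤ C)
    (hb₁b₂ : ∀ t ∈ Ici (0 : ℝ), b₁ t ≤ b₂ t)
    (haa₀ : ∀ t ∈ Ici (0 : ℝ), a₀ ≤ a t)
    (A₀ : ℝ) (hA₀ : A₀ > ⨆ t : Ici (0 : ℝ), b₂ t) :
    ¬ ∃ A : ℝ → ℝ, A 0 = A₀ ∧ ContinuousOn A (Ici 0) ∧
      ∀ t ∈ Ioi (0 : ℝ), HasDerivAt A (a t * (A t - b₁ t) * (A t - b₂ t)) t := by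
  rintro ⟨A, hA0, hAc, hA'⟩
  set M : ℝ := ⨆ t : Ici (0 : ℝ), b₂ t with hM
  obtain ⟨C, hC⟩ := hbdd
  have hbdd2 : BddAbove (range fun t : Ici (0 : ℝ) => b₂ t) :=
    ⟨C, by rintro x ⟨t, rfl⟩; exact le_trans (le_abs_self _) (hC t t.2).2.2⟩
  have hb₂M : ∀ t ∈ Ici (0 : ℝ), b₂ t ≤ M := fun t ht =>
    le_ciSup hbdd2 (⟨t, ht⟩ : Ici (0 : ℝ))
  have hb₁M : ∀ t ∈ Ici (0 : ℝ), b₁ t ≤ M := fun t ht =>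
    le_trans (hb₁b₂ t ht) (hb₂M t ht)
  -- Step 1 : A t > M for all t ≥ 0
  have hApos : ∀ t ∈ Ici (0 : ℝ), M < A t := by
    by_contra h
    push_neg at h
    obtain ⟨t₀, ht₀, ht₀M⟩ := h
    set S : Set ℝ := Ici 0 ∩ A ⁻¹' Iic M with hS
    have hSclosed : IsClosed S :=
      hAc.preimage_isClosed_of_isClosed isClosed_Ici isClosed_Iic
    have hSne : S.Nonempty := ⟨t₀, ht₀, ht₀M⟩
    have hSbdd : BddBelow S := ⟨0, fun x hx => hx.1⟩
    set s := sInf S with hs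
    have hsS : s ∈ S := hSclosed.csInf_mem hSne hSbdd
    have hs0 : 0 ≤ s := hsS.1
    have hsM : A s ≤ M := hsS.2
    have hsne : s ≠ 0 := by
      intro h0
      rw [h0, hA0] at hsM
      exact absurd hsM (not_le.2 hA₀)
    have hspos : 0 < s := lt_of_le_of_ne hs0 (Ne.symm hsne)
    have hlt : ∀ t, 0 ≤ t → t < s → M < A t := by
      intro t ht hts
      by_contra hle
      exact absurd (csInf_le hSbdd ⟨ht, not_lt.1 hle⟩) (not_le.2 hts)
    -- A is monotone on [0, s]
    have hmono : MonotoneOn A (Icc 0 s) := by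
      apply monotoneOn_of_deriv_nonneg (convex_Icc 0 s)
        (hAc.mono (Icc_subset_Ici_self))
      · intro x hx
        rw [interior_Icc] at hx
        exact ((hA' x hx.1).differentiableAt).differentiableWithinAt
      · intro x hx
        rw [interior_Icc] at hx
        have hx0 : (0:ℝ) ≤ x := le_of_lt hx.1
        have hd := (hA' x hx.1).deriv
        rw [hd]
        have h1 : 0 < A x - b₁ x := by
          have := hb₁M x hx0
          have := hlt x hx0 hx.2
          linarith
        have h2 : 0 < A x - b₂ x := by
          have := hb₂M x hx0
          have := hlt x hx0 hx.2
          linarith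
        have h3 : 0 < a x := lt_of_lt_of_le ha₀ (haa₀ x hx0)
        positivity
    have := hmono (left_mem_Icc.2 hs0) (right_mem_Icc.2 hs0) hs0
    rw [hA0] at this
    linarith
  -- Step 2 : comparison function g
  set g : ℝ → ℝ := fun t => (A t - M)⁻¹ + a₀ * t with hg
  have hAne : ∀ t ∈ Ici (0 : ℝ), A t - M ≠ 0 := fun t ht =>
    ne_of_gt (sub_pos.2 (hApos t ht))
  have hganti : AntitoneOn g (Ici 0) := by
    apply antitoneOn_of_deriv_nonpos (convex_Ici 0)
    · exact (((hAc.sub continuousOn_const).inv₀ hAne).add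
        (continuousOn_const.mul continuousOn_id))
    · intro x hx
      rw [interior_Ici] at hx
      have hx0 : (0:ℝ) ≤ x := le_of_lt hx
      have hD : HasDerivAt g
          (-(a x * (A x - b₁ x) * (A x - b₂ x)) / (A x - M)^2 + a₀) x := by
        have h1 : HasDerivAt (fun t => (A t - M)⁻¹)
            (-(a x * (A x - b₁ x) * (A x - b₂ x)) / (A x - M)^2) x :=
          ((hA' x hx).sub_const M).inv (hAne x hx0)
        have h2 : HasDerivAt (fun t => a₀ * t) a₀ x := by
          simpa using (hasDerivAt_id x).const_mul a₀
        exact h1.add h2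
      exact hD.differentiableAt.differentiableWithinAt
    · intro x hx
      rw [interior_Ici] at hx
      have hx0 : (0:ℝ) ≤ x := le_of_lt hx
      have hD : HasDerivAt g
          (-(a x * (A x - b₁ x) * (A x - b₂ x)) / (A x - M)^2 + a₀) x := by
        have h1 : HasDerivAt (fun t => (A t - M)⁻¹)
            (-(a x * (A x - b₁ x) * (A x - b₂ x)) / (A x - M)^2) x :=
          ((hA' x hx).sub_const M).inv (hAne x hx0)
        have h2 : HasDerivAt (fun t => a₀ * t) a₀ x := by
          simpa using (hasDerivAt_id x).const_mul a₀
        exact h1.add h2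
      rw [hD.deriv]
      have hAM : 0 < A x - M := sub_pos.2 (hApos x hx0)
      have h1 : A x - M ≤ A x - b₁ x := by have := hb₁M x hx0; linarith
      have h2 : A x - M ≤ A x - b₂ x := by have := hb₂M x hx0; linarith
      have h3 : a₀ ≤ a x := haa₀ x hx0
      have p1 : (A x - M) * (A x - M) ≤ (A x - b₁ x) * (A x - b₂ x) :=
        mul_le_mul h1 h2 hAM.le (by linarith)
      have p2 : 0 < (A x - b₁ x) * (A x - b₂ x) :=
        mul_pos (by linarith) (by linarith)
      have hkey : a₀ * (A x - M)^2 ≤ a x * (A x - b₁ x) * (A x - b₂ x) := by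
        nlinarith [p1, p2]
      rw [div_add' _ _ _ (ne_of_gt (pow_pos hAM 2)), div_nonpos_iff]
      right
      constructor
      · nlinarith
      · exact le_of_lt (pow_pos hAM 2)
  -- Step 3 : contradiction at large time
  set T : ℝ := (A₀ - M)⁻¹ / a₀ + 1 with hT
  have hA₀M : 0 < A₀ - M := sub_pos.2 hA₀
  have hT0 : (0:ℝ) ≤ T := by positivity
  have := hganti self_mem_Ici hT0 hT0
  have hg0 : g 0 = (A₀ - M)⁻¹ := by simp [hg, hA0]
  have hgT : 0 < (A T - M)⁻¹ :=
    inv_pos.2 (sub_pos.2 (hApos T hT0))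
  have hTg : (A₀ - M)⁻¹ < a₀ * T := by
    rw [hT]
    have h4 : 0 < (A₀ - M)⁻¹ := inv_pos.2 (sub_pos.2 hA₀)
    rw [mul_add, mul_one, mul_div_cancel₀ _ (ne_of_gt ha₀)]
    linarith
  rw [hg0] at this
  simp only [g] at this
  linarith
end

section
/- Let a, b₁, b₂ : [0,∞) → ℝ be continuous and uniformly bounded with a(t) > 0 and b₁(t) ≤ b₂(t) for all t. Suppose there exists a constant b̄ such that b₁(t) ≤ b̄ ≤ b₂(t) for all t ≥ 0, and let A₀ ≤ b̄. Then the Riccati equation dA/dt = a(t) (A − b₁(t)) (A − b₂(t)), A(0) = A₀, admits a unique global solution A : [0,∞) → ℝ, and this solution is bounded, satisfying min{ A₀, inf_{t≥0} b₁(t) } ≤ A(t) ≤ b̄ for all t ≥ 0. -/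
open Set Metric

private lemma riccati_diff_bound (a p q x y : ℝ) :
    |a * (x - p) * (x - q) - a * (y - p) * (y - q)| ≤ |a| * ((|x - q| + |y - p|) * |x - y|) := by
  have h : a * (x - p) * (x - q) - a * (y - p) * (y - q)
      = a * (((x - q) + (y - p)) * (x - y)) := by ring
  rw [h, abs_mul, abs_mul]
  exact mul_le_mul_of_nonneg_left
    (mul_le_mul_of_nonneg_right (abs_add_le _ _) (abs_nonneg _)) (abs_nonneg _)

/-- Under the stated assumptions, if `b₁(t) ≤ bbar ≤ b₂(t)` for all `t ≥ 0`
and `A₀ ≤ bbar`, then the Riccati equation `dA/dt = a(t)(A − b₁(t))(A − b₂(t))`, `A(0)=A₀`,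
has a unique global solution on `[0,∞)`, bounded by `min{A₀, inf b₁} ≤ A(t) ≤ bbar`. -/
theorem riccati_global_bounded
    (a b₁ b₂ : ℝ → ℝ)
    (hacont : ContinuousOn a (Ici 0)) (hb₁cont : ContinuousOn b₁ (Ici 0))
    (hb₂cont : ContinuousOn b₂ (Ici 0))
    (hbdd : ∃ C, ∀ t ∈ Ici (0 : ℝ), |a t| ≤ C ∧ |b₁ t| ≤ C ∧ |b₂ t| ≤ C)
    (hapos : ∀ t ∈ Ici (0 : ℝ), 0 < a t)
    (hb₁b₂ : ∀ t ∈ Ici (0 : ℝ), b₁ t ≤ b₂ t)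
    (bbar : ℝ) (hbar : ∀ t ∈ Ici (0 : ℝ), b₁ t ≤ bbar ∧ bbar ≤ b₂ t)
    (A₀ : ℝ) (hA₀ : A₀ ≤ bbar) :
    (∃ A : ℝ → ℝ, A 0 = A₀ ∧
      (∀ t ∈ Ici (0 : ℝ), HasDerivWithinAt A (a t * (A t - b₁ t) * (A t - b₂ t)) (Ici 0) t) ∧
      (∀ t ∈ Ici (0 : ℝ), min A₀ (⨅ s : Ici (0 : ℝ), b₁ s) ≤ A t ∧ A t ≤ bbar)) ∧
    (∀ A B : ℝ → ℝ, A 0 = A₀ → B 0 = A₀ →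
      (∀ t ∈ Ici (0 : ℝ), HasDerivWithinAt A (a t * (A t - b₁ t) * (A t - b₂ t)) (Ici 0) t) →
      (∀ t ∈ Ici (0 : ℝ), HasDerivWithinAt B (a t * (B t - b₁ t) * (B t - b₂ t)) (Ici 0) t) →
      ∀ t ∈ Ici (0 : ℝ), A t = B t) := by
  obtain ⟨C, hC⟩ := hbdd
  have hC0 : (0:ℝ) ≤ C := (abs_nonneg (a 0)).trans (hC 0 (mem_Ici.mpr le_rfl)).1
  constructor
  · -- EXISTENCE
    set inf₁ : ℝ := ⨅ s : Ici (0:ℝ), b₁ s with hinf₁def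
    have hbb : BddBelow (range fun s : Ici (0:ℝ) => b₁ ↑s) := by
      refine ⟨-C, ?_⟩
      rintro _ ⟨s, rfl⟩
      have := (abs_le.mp (hC s s.2).2.1).1
      linarith
    have hinf_le : ∀ t ∈ Ici (0:ℝ), inf₁ ≤ b₁ t := fun t ht => ciInf_le hbb ⟨t, ht⟩
    set m : ℝ := min A₀ inf₁ with hmdef
    have hmA₀ : m ≤ A₀ := min_le_left _ _
    have hmb₁ : ∀ t ∈ Ici (0:ℝ), m ≤ b₁ t := fun t ht => (min_le_right _ _).trans (hinf_le t ht)
    have hmb₂ : ∀ t ∈ Ici (0:ℝ), m ≤ b₂ t := fun t ht => (hmb₁ t ht).trans (hb₁b₂ t ht)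
    have hmbar : m ≤ bbar := hmA₀.trans hA₀
    -- the clamp function
    set pr : ℝ → ℝ := fun x => max (min x bbar) m with hprdef
    have hpr_ge : ∀ x, m ≤ pr x := fun x => le_max_right _ _
    have hpr_le : ∀ x, pr x ≤ bbar := fun x => max_le (min_le_right _ _) hmbar
    have hpr_eq : ∀ x, m ≤ x → x ≤ bbar → pr x = x := fun x h1 h2 => by
      simp only [hprdef]
      rw [min_eq_left h2, max_eq_left h1]
    have hpr_lip : ∀ x y, |pr x - pr y| ≤ |x - y| := by
      intro x y
      refine (abs_max_sub_max_le_abs _ _ _).trans ?_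
      have h := abs_min_sub_min_le_max x bbar y bbar
      rwa [sub_self, abs_zero, max_eq_left (abs_nonneg _)] at h
    set P : ℝ := max |m| |bbar| with hPdef
    have hP0 : (0:ℝ) ≤ P := (abs_nonneg m).trans (le_max_left _ _)
    have hpr_abs : ∀ x, |pr x| ≤ P := by
      intro x
      rw [abs_le]
      constructor
      · have h1 : -|m| ≤ m := neg_abs_le m
        have h2 : |m| ≤ P := le_max_left _ _
        linarith [hpr_ge x]
      · have h1 : bbar ≤ |bbar| := le_abs_self _
        have h2 : |bbar| ≤ P := le_max_right _ _
        linarith [hpr_le x]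
    set B : ℝ := P + C with hBdef
    have hB0 : (0:ℝ) ≤ B := add_nonneg hP0 hC0
    have hsub_abs : ∀ (x : ℝ), ∀ t ∈ Ici (0:ℝ), |pr x - b₁ t| ≤ B ∧ |pr x - b₂ t| ≤ B := by
      intro x t ht
      have h1 := abs_le.mp (hpr_abs x)
      have h2 := abs_le.mp (hC t ht).2.1
      have h3 := abs_le.mp (hC t ht).2.2
      exact ⟨abs_le.mpr ⟨by simp only [hBdef]; linarith, by simp only [hBdef]; linarith⟩,
        abs_le.mpr ⟨by simp only [hBdef]; linarith, by simp only [hBdef]; linarith⟩⟩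
    set M : ℝ := C * B * B with hMdef
    have hM0 : (0:ℝ) ≤ M := mul_nonneg (mul_nonneg hC0 hB0) hB0
    have hM : ∀ t ∈ Ici (0:ℝ), ∀ x, |a t * (pr x - b₁ t) * (pr x - b₂ t)| ≤ M := by
      intro t ht x
      rw [abs_mul, abs_mul]
      obtain ⟨h2, h3⟩ := hsub_abs x t ht
      exact mul_le_mul (mul_le_mul (hC t ht).1 h2 (abs_nonneg _) hC0) h3 (abs_nonneg _)
        (mul_nonneg hC0 hB0)
    set K : ℝ := C * (B + B) with hKdef
    have hK0 : (0:ℝ) ≤ K := mul_nonneg hC0 (by linarith)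
    have hKlip : ∀ t ∈ Ici (0:ℝ),
        LipschitzWith K.toNNReal (fun x => a t * (pr x - b₁ t) * (pr x - b₂ t)) := by
      intro t ht
      apply LipschitzWith.of_dist_le_mul
      intro x y
      rw [Real.dist_eq, Real.dist_eq, Real.coe_toNNReal K hK0]
      calc |a t * (pr x - b₁ t) * (pr x - b₂ t) - a t * (pr y - b₁ t) * (pr y - b₂ t)|
          ≤ |a t| * ((|pr x - b₂ t| + |pr y - b₁ t|) * |pr x - pr y|) :=
            riccati_diff_bound _ _ _ _ _
        _ ≤ C * ((B + B) * |x - y|) := by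
            have h0 := hpr_lip x y
            have h1 := (hC t ht).1
            have h2 := (hsub_abs x t ht).2
            have h3 := (hsub_abs y t ht).1
            have h4 : (|pr x - b₂ t| + |pr y - b₁ t|) * |pr x - pr y| ≤ (B + B) * |x - y| :=
              mul_le_mul (add_le_add h2 h3) h0 (abs_nonneg _) (by linarith)
            exact mul_le_mul h1 h4 (mul_nonneg (add_nonneg (abs_nonneg _) (abs_nonneg _))
              (abs_nonneg _)) hC0
        _ = K * |x - y| := by rw [hKdef]; ring
    -- local solutions on [0, n] via Picard–Lindelöf
    have hex : ∀ n : ℕ, ∃ f : ℝ → ℝ, f 0 = A₀ ∧ ∀ t ∈ Icc (0:ℝ) n,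
        HasDerivWithinAt f (a t * (pr (f t) - b₁ t) * (pr (f t) - b₂ t)) (Icc (0:ℝ) n) t := by
      intro n
      have hsub : Icc (0:ℝ) n ⊆ Ici 0 := Icc_subset_Ici_self
      have hpl : IsPicardLindelof (fun t x => a t * (pr x - b₁ t) * (pr x - b₂ t))
          (tmin := 0) (tmax := n) ⟨0, le_rfl, n.cast_nonneg⟩ A₀ (M * n).toNNReal 0 M.toNNReal
          K.toNNReal := by
        refine ⟨?_, ?_, ?_, ?_⟩
        · exact fun t ht => (hKlip t (hsub ht)).lipschitzOnWith
        · intro x _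
          exact ((hacont.mono hsub).mul (continuousOn_const.sub (hb₁cont.mono hsub))).mul
            (continuousOn_const.sub (hb₂cont.mono hsub))
        · intro t ht x _
          rw [Real.norm_eq_abs, Real.coe_toNNReal M hM0]
          exact hM t (hsub ht) x
        · show (M.toNNReal : ℝ) * max ((n:ℝ) - 0) (0 - 0) ≤ ((M * n).toNNReal : ℝ) - ((0 : NNReal) : ℝ)
          rw [Real.coe_toNNReal _ hM0, Real.coe_toNNReal _ (mul_nonneg hM0 n.cast_nonneg)]
          simp only [NNReal.coe_zero, sub_zero, sub_self, max_eq_left n.cast_nonneg, le_refl]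
      exact hpl.exists_eq_forall_mem_Icc_hasDerivWithinAt₀
    choose α hα0 hαd using hex
    -- uniqueness of the clamped equation (for gluing)
    have huniq : ∀ (f g : ℝ → ℝ) (T : ℝ), f 0 = g 0 →
        ContinuousOn f (Icc 0 T) → ContinuousOn g (Icc 0 T) →
        (∀ u ∈ Ico (0:ℝ) T,
          HasDerivWithinAt f (a u * (pr (f u) - b₁ u) * (pr (f u) - b₂ u)) (Ici u) u) →
        (∀ u ∈ Ico (0:ℝ) T,
          HasDerivWithinAt g (a u * (pr (g u) - b₁ u) * (pr (g u) - b₂ u)) (Ici u) u) →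
        EqOn f g (Icc 0 T) := by
      intro f g T h0 hfc hgc hf' hg'
      refine ODE_solution_unique_of_mem_Icc_right
        (v := fun u x => a (max u 0) * (pr x - b₁ (max u 0)) * (pr x - b₂ (max u 0)))
        (s := fun _ => univ) (K := K.toNNReal)
        (fun u _ => (hKlip (max u 0) (mem_Ici.mpr (le_max_right _ _))).lipschitzOnWith)
        hfc (fun u hu => ?_) (fun u hu => trivial) hgc (fun u hu => ?_)
        (fun u hu => trivial) h0
      · simpa [max_eq_left hu.1] using hf' u hu
      · simpa [max_eq_left hu.1] using hg' u hu
    have hαcont : ∀ n : ℕ, ContinuousOn (α n) (Icc (0:ℝ) n) :=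
      fun n u hu => (hαd n u hu).continuousWithinAt
    have hαIci : ∀ (n : ℕ) (u : ℝ), 0 ≤ u → u < n →
        HasDerivWithinAt (α n) (a u * (pr (α n u) - b₁ u) * (pr (α n u) - b₂ u)) (Ici u) u := by
      intro n u h0u hun
      refine (hαd n u ⟨h0u, hun.le⟩).mono_of_mem_nhdsWithin ?_
      exact Filter.mem_of_superset (Icc_mem_nhdsGE hun) (Icc_subset_Icc h0u le_rfl)
    have hcons : ∀ k l : ℕ, ∀ t : ℝ, t ∈ Icc (0:ℝ) k → t ∈ Icc (0:ℝ) l → α k t = α l t := by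
      intro k l t htk htl
      have hTk : min (k:ℝ) l ≤ k := min_le_left _ _
      have hTl : min (k:ℝ) l ≤ l := min_le_right _ _
      refine huniq (α k) (α l) (min (k:ℝ) l) (by rw [hα0, hα0])
        ((hαcont k).mono (Icc_subset_Icc_right hTk)) ((hαcont l).mono (Icc_subset_Icc_right hTl))
        (fun u hu => hαIci k u hu.1 (lt_of_lt_of_le hu.2 hTk))
        (fun u hu => hαIci l u hu.1 (lt_of_lt_of_le hu.2 hTl))
        ⟨htk.1, le_min htk.2 htl.2⟩
    -- the glued global solution
    set A : ℝ → ℝ := fun t => α (⌊t⌋₊ + 1) t with hAdef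
    have hA0 : A 0 = A₀ := by simp only [hAdef]; exact hα0 _
    have hA_eq : ∀ n : ℕ, ∀ t ∈ Icc (0:ℝ) n, A t = α n t := by
      intro n t ht
      exact hcons (⌊t⌋₊ + 1) n t ⟨ht.1, by push_cast; exact (Nat.lt_floor_add_one t).le⟩ ht
    have hAd : ∀ t ∈ Ici (0:ℝ),
        HasDerivWithinAt A (a t * (pr (A t) - b₁ t) * (pr (A t) - b₂ t)) (Ici 0) t := by
      intro t ht
      have htn : t < ((⌊t⌋₊ + 1 : ℕ) : ℝ) := by push_cast; exact Nat.lt_floor_add_one t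
      have hmem : Icc (0:ℝ) ((⌊t⌋₊ + 1 : ℕ) : ℝ) ∈ nhdsWithin t (Ici (0:ℝ)) := by
        refine Filter.mem_of_superset (inter_mem_nhdsWithin (Ici 0) (Iic_mem_nhds htn)) ?_
        exact fun x hx => ⟨hx.1, hx.2⟩
      have h1 : HasDerivWithinAt (α (⌊t⌋₊ + 1))
          (a t * (pr (α (⌊t⌋₊ + 1) t) - b₁ t) * (pr (α (⌊t⌋₊ + 1) t) - b₂ t)) (Ici 0) t :=
        (hαd (⌊t⌋₊ + 1) t ⟨ht, htn.le⟩).mono_of_mem_nhdsWithin hmem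
      have h2 : A t = α (⌊t⌋₊ + 1) t := hA_eq (⌊t⌋₊ + 1) t ⟨ht, htn.le⟩
      rw [h2]
      exact h1.congr_of_eventuallyEq
        (Filter.eventuallyEq_of_mem hmem (fun u hu => hA_eq (⌊t⌋₊ + 1) u hu)) h2
    have hAcont : ContinuousOn A (Ici 0) := fun u hu => (hAd u hu).continuousWithinAt
    -- upper bound: A t ≤ bbar
    have hub : ∀ t ∈ Ici (0:ℝ), A t ≤ bbar := by
      by_contra h
      push_neg at h
      obtain ⟨t₁, ht₁, hgt⟩ := h
      obtain ⟨S, hSdef⟩ : ∃ S : Set ℝ, S = Icc 0 t₁ ∩ A ⁻¹' Iic bbar := ⟨_, rfl⟩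
      have hScl : IsClosed S := by
        rw [hSdef]
        exact (hAcont.mono Icc_subset_Ici_self).preimage_isClosed_of_isClosed
          isClosed_Icc isClosed_Iic
      have hScpt : IsCompact S := isCompact_Icc.of_isClosed_subset hScl
        (hSdef ▸ inter_subset_left)
      have hS0 : (0:ℝ) ∈ S := by
        rw [hSdef]
        exact ⟨⟨le_rfl, ht₁⟩, by simp only [mem_preimage, mem_Iic, hA0]; exact hA₀⟩
      have hs₀S : sSup S ∈ Icc 0 t₁ ∩ A ⁻¹' Iic bbar := hSdef ▸ hScpt.sSup_mem ⟨0, hS0⟩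
      have hs₀0 : 0 ≤ sSup S := hs₀S.1.1
      have hs₀bar : A (sSup S) ≤ bbar := hs₀S.2
      have hlt : sSup S < t₁ :=
        lt_of_le_of_ne hs₀S.1.2 (by intro he; rw [he] at hs₀bar; exact absurd hs₀bar (not_le.mpr hgt))
      have habove : ∀ u ∈ Ioc (sSup S) t₁, bbar < A u := by
        intro u hu
        by_contra hle
        push_neg at hle
        have huS : u ∈ S := hSdef ▸ ⟨⟨hs₀0.trans hu.1.le, hu.2⟩, hle⟩
        exact absurd (le_csSup hScpt.bddAbove huS) (not_le.mpr hu.1)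
      have hanti : AntitoneOn A (Icc (sSup S) t₁) := by
        refine antitoneOn_of_deriv_nonpos (convex_Icc _ _)
          (hAcont.mono (fun u hu => hs₀0.trans hu.1)) ?_ ?_
        · intro x hx
          rw [interior_Icc] at hx
          have hx0 : (0:ℝ) < x := lt_of_le_of_lt hs₀0 hx.1
          exact ((hAd x hx0.le).hasDerivAt
            (Ici_mem_nhds hx0)).differentiableAt.differentiableWithinAt
        · intro x hx
          rw [interior_Icc] at hx
          have hx0 : (0:ℝ) < x := lt_of_le_of_lt hs₀0 hx.1
          have hd := (hAd x hx0.le).hasDerivAt (Ici_mem_nhds hx0)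
          rw [hd.deriv]
          have hAx : bbar < A x := habove x ⟨hx.1, hx.2.le⟩
          have hprx : pr (A x) = bbar := by
            simp only [hprdef]
            rw [min_eq_right hAx.le, max_eq_left hmbar]
          rw [hprx]
          exact mul_nonpos_of_nonneg_of_nonpos
            (mul_nonneg (hapos x hx0.le).le (sub_nonneg.2 (hbar x hx0.le).1))
            (sub_nonpos.2 (hbar x hx0.le).2)
      have := hanti (left_mem_Icc.mpr hlt.le) (right_mem_Icc.mpr hlt.le) hlt.le
      linarith
    -- lower bound: m ≤ A t
    have hlb : ∀ t ∈ Ici (0:ℝ), m ≤ A t := by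
      by_contra h
      push_neg at h
      obtain ⟨t₁, ht₁, hgt⟩ := h
      obtain ⟨S, hSdef⟩ : ∃ S : Set ℝ, S = Icc 0 t₁ ∩ A ⁻¹' Ici m := ⟨_, rfl⟩
      have hScl : IsClosed S := by
        rw [hSdef]
        exact (hAcont.mono Icc_subset_Ici_self).preimage_isClosed_of_isClosed
          isClosed_Icc isClosed_Ici
      have hScpt : IsCompact S := isCompact_Icc.of_isClosed_subset hScl
        (hSdef ▸ inter_subset_left)
      have hS0 : (0:ℝ) ∈ S := by
        rw [hSdef]
        exact ⟨⟨le_rfl, ht₁⟩, by simp only [mem_preimage, mem_Ici, hA0]; exact hmA₀⟩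
      have hs₀S : sSup S ∈ Icc 0 t₁ ∩ A ⁻¹' Ici m := hSdef ▸ hScpt.sSup_mem ⟨0, hS0⟩
      have hs₀0 : 0 ≤ sSup S := hs₀S.1.1
      have hs₀m : m ≤ A (sSup S) := hs₀S.2
      have hlt : sSup S < t₁ :=
        lt_of_le_of_ne hs₀S.1.2 (by intro he; rw [he] at hs₀m; exact absurd hs₀m (not_le.mpr hgt))
      have hbelow : ∀ u ∈ Ioc (sSup S) t₁, A u < m := by
        intro u hu
        by_contra hle
        push_neg at hle
        have huS : u ∈ S := hSdef ▸ ⟨⟨hs₀0.trans hu.1.le, hu.2⟩, hle⟩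
        exact absurd (le_csSup hScpt.bddAbove huS) (not_le.mpr hu.1)
      have hmono : MonotoneOn A (Icc (sSup S) t₁) := by
        refine monotoneOn_of_deriv_nonneg (convex_Icc _ _)
          (hAcont.mono (fun u hu => hs₀0.trans hu.1)) ?_ ?_
        · intro x hx
          rw [interior_Icc] at hx
          have hx0 : (0:ℝ) < x := lt_of_le_of_lt hs₀0 hx.1
          exact ((hAd x hx0.le).hasDerivAt
            (Ici_mem_nhds hx0)).differentiableAt.differentiableWithinAt
        · intro x hx
          rw [interior_Icc] at hx
          have hx0 : (0:ℝ) < x := lt_of_le_of_lt hs₀0 hx.1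
          have hd := (hAd x hx0.le).hasDerivAt (Ici_mem_nhds hx0)
          rw [hd.deriv]
          have hAx : A x < m := hbelow x ⟨hx.1, hx.2.le⟩
          have hprx : pr (A x) = m := by
            simp only [hprdef]
            rw [min_eq_left (hAx.le.trans hmbar), max_eq_right hAx.le]
          rw [hprx]
          have h1 : a x * (m - b₁ x) ≤ 0 :=
            mul_nonpos_of_nonneg_of_nonpos (hapos x hx0.le).le (sub_nonpos.2 (hmb₁ x hx0.le))
          have h2 : m - b₂ x ≤ 0 := sub_nonpos.2 (hmb₂ x hx0.le)
          nlinarith [mul_nonneg (neg_nonneg.2 h1) (neg_nonneg.2 h2)]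
      have := hmono (left_mem_Icc.mpr hlt.le) (right_mem_Icc.mpr hlt.le) hlt.le
      linarith
    refine ⟨A, hA0, fun t ht => ?_, fun t ht => ⟨hlb t ht, hub t ht⟩⟩
    have hd := hAd t ht
    rwa [hpr_eq (A t) (hlb t ht) (hub t ht)] at hd
  · -- UNIQUENESS
    intro f g hf0 hg0 hf' hg' t ht
    have hfc : ContinuousOn f (Ici 0) := fun u hu => (hf' u hu).continuousWithinAt
    have hgc : ContinuousOn g (Ici 0) := fun u hu => (hg' u hu).continuousWithinAt
    obtain ⟨Cf, hCf⟩ := isCompact_Icc.exists_bound_of_continuousOn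
      (hfc.mono (Icc_subset_Ici_self : Icc (0:ℝ) t ⊆ _))
    obtain ⟨Cg, hCg⟩ := isCompact_Icc.exists_bound_of_continuousOn
      (hgc.mono (Icc_subset_Ici_self : Icc (0:ℝ) t ⊆ _))
    simp only [Real.norm_eq_abs] at hCf hCg
    set ρ : ℝ := max Cf Cg with hρdef
    have hρ0 : (0:ℝ) ≤ ρ :=
      (abs_nonneg (f 0)).trans ((hCf 0 (left_mem_Icc.mpr ht)).trans (le_max_left _ _))
    set K' : ℝ := C * ((ρ + C) + (ρ + C)) with hK'def
    have hK'0 : (0:ℝ) ≤ K' := mul_nonneg hC0 (by linarith)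
    have habs : ∀ p q : ℝ, |p| ≤ ρ → |q| ≤ C → |p - q| ≤ ρ + C := by
      intro p q hp hq
      have h1 := abs_le.mp hp
      have h2 := abs_le.mp hq
      exact abs_le.mpr ⟨by linarith, by linarith⟩
    have hv : ∀ u : ℝ, LipschitzOnWith K'.toNNReal
        (fun x => a (max u 0) * (x - b₁ (max u 0)) * (x - b₂ (max u 0)))
        (closedBall (0:ℝ) ρ) := by
      intro u
      apply LipschitzOnWith.of_dist_le_mul
      intro x hx y hy
      rw [Real.dist_eq, Real.dist_eq, Real.coe_toNNReal K' hK'0]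
      have hu0 : max u 0 ∈ Ici (0:ℝ) := mem_Ici.mpr (le_max_right _ _)
      have hxρ : |x| ≤ ρ := by rwa [mem_closedBall, Real.dist_eq, sub_zero] at hx
      have hyρ : |y| ≤ ρ := by rwa [mem_closedBall, Real.dist_eq, sub_zero] at hy
      calc |a (max u 0) * (x - b₁ (max u 0)) * (x - b₂ (max u 0)) -
              a (max u 0) * (y - b₁ (max u 0)) * (y - b₂ (max u 0))|
          ≤ |a (max u 0)| * ((|x - b₂ (max u 0)| + |y - b₁ (max u 0)|) * |x - y|) :=
            riccati_diff_bound _ _ _ _ _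
        _ ≤ C * (((ρ + C) + (ρ + C)) * |x - y|) := by
            have h1 := habs x (b₂ (max u 0)) hxρ (hC _ hu0).2.2
            have h2 := habs y (b₁ (max u 0)) hyρ (hC _ hu0).2.1
            have h4 : (|x - b₂ (max u 0)| + |y - b₁ (max u 0)|) * |x - y|
                ≤ ((ρ + C) + (ρ + C)) * |x - y| :=
              mul_le_mul_of_nonneg_right (add_le_add h1 h2) (abs_nonneg _)
            exact mul_le_mul (hC _ hu0).1 h4 (mul_nonneg (add_nonneg (abs_nonneg _)
              (abs_nonneg _)) (abs_nonneg _)) hC0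
        _ = K' * |x - y| := by rw [hK'def]; ring
    have heq : EqOn f g (Icc 0 t) := by
      refine ODE_solution_unique_of_mem_Icc_right
        (v := fun u x => a (max u 0) * (x - b₁ (max u 0)) * (x - b₂ (max u 0)))
        (s := fun _ => closedBall (0:ℝ) ρ) (K := K'.toNNReal) (fun u _ => hv u)
        (hfc.mono Icc_subset_Ici_self) (fun u hu => ?_) (fun u hu => ?_)
        (hgc.mono Icc_subset_Ici_self) (fun u hu => ?_) (fun u hu => ?_)
        (hf0.trans hg0.symm)
      · simpa [max_eq_left hu.1] using (hf' u hu.1).mono (Ici_subset_Ici.mpr hu.1)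
      · rw [mem_closedBall, Real.dist_eq, sub_zero]
        exact (hCf u ⟨hu.1, hu.2.le⟩).trans (le_max_left _ _)
      · simpa [max_eq_left hu.1] using (hg' u hu.1).mono (Ici_subset_Ici.mpr hu.1)
      · rw [mem_closedBall, Real.dist_eq, sub_zero]
        exact (hCg u ⟨hu.1, hu.2.le⟩).trans (le_max_right _ _)
    exact heq (right_mem_Icc.mpr ht)
end

section
/- Let a, b₁, b₂ : [0,∞) → ℝ be continuous and uniformly bounded with b₁(t) ≤ b₂(t) for all t, and suppose a(t) ≥ a₀ for some constant a₀ > 0. If B₀ > sup_{t≥0} b₂(t), then there is no locally absolutely continuous function B : [0,∞) → ℝ with B(0) = B₀ satisfying the differential inequality dB/dt ≥ a(t) (B − b₁(t)) (B − b₂(t)) for almost every t ≥ 0; that is, any such B must blow up (cease to exist) in finite time. -/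
open Set MeasureTheory

/-- Let `a, b₁, b₂ : [0,∞) → ℝ` be continuous and uniformly bounded with
`b₁ ≤ b₂` and `a(t) ≥ a₀ > 0`. If `B₀ > sup_{t≥0} b₂(t)`, then there is no locally
absolutely continuous `B : [0,∞) → ℝ` with `B(0) = B₀` satisfying
`dB/dt ≥ a(t)(B − b₁(t))(B − b₂(t))` a.e.; any such `B` must blow up in finite time.
(Local absolute continuity is encoded by the fundamental theorem of calculus
representation `B t = B₀ + ∫₀ᵗ φ` with `φ` locally integrable, `φ` being the a.e.
derivative of `B`.) -/
theorem riccati_inequality_blowup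
    (a b₁ b₂ : ℝ → ℝ) (a₀ : ℝ) (ha₀ : 0 < a₀)
    (hacont : ContinuousOn a (Ici 0)) (hb₁cont : ContinuousOn b₁ (Ici 0))
    (hb₂cont : ContinuousOn b₂ (Ici 0))
    (hbdd : ∃ C, ∀ t ∈ Ici (0 : ℝ), |a t| ≤ C ∧ |b₁ t| ≤ C ∧ |b₂ t| ≤ C)
    (hb₁b₂ : ∀ t ∈ Ici (0 : ℝ), b₁ t ≤ b₂ t)
    (haa₀ : ∀ t ∈ Ici (0 : ℝ), a₀ ≤ a t)
    (B₀ : ℝ) (hB₀ : B₀ > ⨆ t : Ici (0 : ℝ), b₂ t) :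
    ¬ ∃ B φ : ℝ → ℝ, B 0 = B₀ ∧
      (∀ t ∈ Ici (0 : ℝ), IntervalIntegrable φ volume 0 t) ∧
      (∀ t ∈ Ici (0 : ℝ), B t = B₀ + ∫ s in (0 : ℝ)..t, φ s) ∧
      (∀ᵐ t, t ∈ Ici (0 : ℝ) → a t * (B t - b₁ t) * (B t - b₂ t) ≤ φ t) := by
  obtain ⟨C, hC⟩ := hbdd
  set M : ℝ := ⨆ t : Ici (0 : ℝ), b₂ t with hMdef
  have hbdd2 : BddAbove (Set.range fun t : Ici (0 : ℝ) => b₂ t) := by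
    refine ⟨C, ?_⟩
    rintro _ ⟨t, rfl⟩
    exact (abs_le.mp (hC t t.2).2.2).2
  have hb₂M : ∀ t ∈ Ici (0 : ℝ), b₂ t ≤ M := fun t ht => le_ciSup hbdd2 ⟨t, ht⟩
  have hMB : M < B₀ := hB₀
  rintro ⟨B, φ, hB0, hInt, hRep, hAE⟩
  -- integrability on subintervals
  have hIntst : ∀ s t : ℝ, 0 ≤ s → s ≤ t → IntervalIntegrable φ volume s t := by
    intro s t hs hst
    exact (hInt t (hs.trans hst)).mono_set
      (by rw [uIcc_of_le hst, uIcc_of_le (hs.trans hst)]; exact Icc_subset_Icc hs le_rfl)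
  -- B t - B s = ∫ s..t φ
  have hdiff : ∀ s t : ℝ, 0 ≤ s → s ≤ t → B t - B s = ∫ u in s..t, φ u := by
    intro s t hs hst
    rw [hRep s hs, hRep t (hs.trans hst)]
    have := intervalIntegral.integral_add_adjacent_intervals
      (hInt s hs) (hIntst s t hs hst)
    linarith [this]
  -- key comparison lemma
  have key : ∀ s t m : ℝ, 0 ≤ s → s ≤ t → M ≤ m → (∀ u ∈ Ico s t, m ≤ B u) →
      a₀ * (m - M)^2 * (t - s) ≤ B t - B s := by
    intro s t m hs hst hMm hlow
    rw [hdiff s t hs hst]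
    have hconst : (∫ u in s..t, a₀ * (m - M)^2) = a₀ * (m - M)^2 * (t - s) := by
      simp [intervalIntegral.integral_const, smul_eq_mul]; ring
    rw [← hconst]
    refine intervalIntegral.integral_mono_ae_restrict hst
      (intervalIntegrable_const) (hIntst s t hs hst) ?_
    have h1 : ∀ᵐ u ∂(volume.restrict (Icc s t)),
        u ∈ Ici (0:ℝ) → a u * (B u - b₁ u) * (B u - b₂ u) ≤ φ u := ae_restrict_of_ae hAE
    have h2 : ∀ᵐ u ∂(volume.restrict (Icc s t)), u ∈ Icc s t :=
      ae_restrict_mem measurableSet_Icc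
    have h3 : ∀ᵐ u ∂(volume.restrict (Icc s t)), u ≠ t := by
      rw [ae_iff]
      have he : {u : ℝ | ¬ u ≠ t} = {t} := by ext u; simp
      rw [he]
      exact le_antisymm ((Measure.restrict_le_self _).trans_eq (measure_singleton t))
        (zero_le)
    filter_upwards [h1, h2, h3] with u hu1 hu2 hu3
    have hu0 : u ∈ Ici (0:ℝ) := hs.trans hu2.1
    have hBm : m ≤ B u := hlow u ⟨hu2.1, lt_of_le_of_ne hu2.2 hu3⟩
    have hb2 : b₂ u ≤ M := hb₂M u hu0
    have hb1 : b₁ u ≤ b₂ u := hb₁b₂ u hu0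
    have ha : a₀ ≤ a u := haa₀ u hu0
    have hd2 : m - M ≤ B u - b₂ u := by linarith
    have hd1 : m - M ≤ B u - b₁ u := by linarith
    have hmM : (0:ℝ) ≤ m - M := by linarith
    refine le_trans ?_ (hu1 hu0)
    nlinarith [mul_le_mul hd1 hd2 hmM (by linarith : (0:ℝ) ≤ B u - b₁ u),
      mul_le_mul_of_nonneg_right ha (mul_nonneg (by linarith : (0:ℝ) ≤ B u - b₁ u)
        (by linarith : (0:ℝ) ≤ B u - b₂ u))]
  -- Step B : B stays ≥ B₀
  have hstay : ∀ t ∈ Ici (0:ℝ), B₀ ≤ B t := by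
    intro tstar htstar
    by_contra hlt
    push_neg at hlt
    set c : ℝ := max (B tstar) ((M + B₀)/2) with hc
    have hcB : c < B₀ := max_lt hlt (by linarith)
    have hMc : M < c := lt_of_lt_of_le (by linarith) (le_max_right _ _)
    have hBtc : B tstar ≤ c := le_max_left _ _
    set S : Set ℝ := {s ∈ Icc 0 tstar | B s ≤ c} with hS
    have hScont : ContinuousOn B (Icc 0 tstar) := by
      have hprim : ContinuousOn (fun x => B₀ + ∫ u in (0:ℝ)..x, φ u) (Icc 0 tstar) := by
        have := intervalIntegral.continuousOn_primitive_interval'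
          (hInt tstar htstar) (left_mem_uIcc)
        rw [uIcc_of_le htstar] at this
        exact continuousOn_const.add this
      exact hprim.congr (fun x hx => hRep x hx.1)
    have hSclosed : IsClosed S := by
      have : S = Icc 0 tstar ∩ B ⁻¹' (Iic c) := by
        ext u; simp [hS, Set.mem_setOf_eq, and_comm]
      rw [this]
      exact hScont.preimage_isClosed_of_isClosed isClosed_Icc isClosed_Iic
    have hSne : S.Nonempty := ⟨tstar, ⟨⟨htstar, le_rfl⟩, hBtc⟩⟩
    have hSbdd : BddBelow S := ⟨0, fun u hu => hu.1.1⟩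
    set t₁ := sInf S with ht₁
    have ht₁S : t₁ ∈ S := hSclosed.csInf_mem hSne hSbdd
    have ht₁0 : 0 ≤ t₁ := ht₁S.1.1
    have hlow : ∀ u ∈ Ico 0 t₁, c ≤ B u := by
      intro u hu
      by_contra h
      push_neg at h
      have huS : u ∈ S := ⟨⟨hu.1, hu.2.le.trans ht₁S.1.2⟩, h.le⟩
      exact absurd (csInf_le hSbdd huS) (not_le.mpr hu.2)
    have := key 0 t₁ c le_rfl ht₁0 hMc.le hlow
    rw [hB0] at this
    nlinarith [sq_nonneg (c - M), mul_nonneg (mul_nonneg ha₀.le (sq_nonneg (c - M))) ht₁0,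
      ht₁S.2]
  -- Step C : monotone
  have hmono : ∀ s t : ℝ, 0 ≤ s → s ≤ t → B s ≤ B t := by
    intro s t hs hst
    have := key s t B₀ hs hst hMB.le (fun u hu => hstay u (hs.trans hu.1))
    nlinarith [mul_nonneg (mul_nonneg ha₀.le (sq_nonneg (B₀ - M))) (by linarith : (0:ℝ) ≤ t - s)]
  -- Step D : doubling
  set ε : ℝ := B₀ - M with hε
  have hεpos : 0 < ε := by simp [hε]; linarith
  set T : ℝ := 2 / (a₀ * ε) with hT
  have hTpos : 0 < T := div_pos two_pos (mul_pos ha₀ hεpos)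
  set tn : ℕ → ℝ := fun n => T * (1 - (1/2)^n) with htn
  have htn_nonneg : ∀ n, 0 ≤ tn n := by
    intro n
    have : (1/2:ℝ)^n ≤ 1 := pow_le_one₀ (by norm_num) (by norm_num)
    exact mul_nonneg hTpos.le (by linarith)
  have htn_le_T : ∀ n, tn n ≤ T := by
    intro n
    have h0 : (0:ℝ) ≤ (1/2:ℝ)^n := by positivity
    simp only [htn]
    nlinarith
  have htn_mono : ∀ n, tn n ≤ tn (n+1) := by
    intro n
    have : (1/2:ℝ)^(n+1) ≤ (1/2)^n :=
      pow_le_pow_of_le_one (by norm_num) (by norm_num) (Nat.le_succ n)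
    simp only [htn]
    nlinarith
  have hgrow : ∀ n : ℕ, M + 2^n * ε ≤ B (tn n) := by
    intro n
    induction n with
    | zero =>
      simp only [htn, pow_zero, one_mul, sub_self, mul_zero]
      rw [hB0]; simp [hε]
    | succ n ih =>
      have hlev : M ≤ M + 2^n * ε := le_add_of_nonneg_right (by positivity)
      have hlow : ∀ u ∈ Ico (tn n) (tn (n+1)), M + 2^n * ε ≤ B u := by
        intro u hu
        exact ih.trans (hmono (tn n) u (htn_nonneg n) hu.1)
      have hk := key (tn n) (tn (n+1)) (M + 2^n * ε) (htn_nonneg n) (htn_mono n)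
        hlev hlow
      have hdt : tn (n+1) - tn n = 1 / (a₀ * ε) * (1/2)^n := by
        simp only [htn, hT]
        have h1 : a₀ * ε ≠ 0 := by positivity
        field_simp
        ring
      have hval : a₀ * ((M + 2^n * ε) - M)^2 * (tn (n+1) - tn n) = 2^n * ε := by
        rw [hdt]
        have h1 : a₀ ≠ 0 := ne_of_gt ha₀
        have h2 : ε ≠ 0 := ne_of_gt hεpos
        field_simp
        have h3 : (1/2:ℝ)^n * 2^n = 1 := by rw [← mul_pow]; norm_num
        linear_combination (ε^2 * 2^n) * h3
      rw [hval] at hk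
      have : (2:ℝ)^(n+1) * ε = 2^n * ε + 2^n * ε := by ring
      linarith
  -- Step E : contradiction
  obtain ⟨n, hn⟩ := pow_unbounded_of_one_lt ((B T - M)/ε) (by norm_num : (1:ℝ) < 2)
  have h1 : M + 2^n * ε ≤ B T := (hgrow n).trans (hmono (tn n) T (htn_nonneg n) (htn_le_T n))
  have h2 : (B T - M)/ε < 2^n := hn
  rw [div_lt_iff₀ hεpos] at h2
  linarith
end

section
/- Let T > 0 and let a, b₁, b₂ : [0,T] → ℝ be continuous and uniformly bounded with a(t) > 0 and b₁(t) ≤ b₂(t) for all t. If B : [0,T] → ℝ is locally absolutely continuous with B(0) = B₀ and satisfies dB/dt ≥ a(t) (B − b₁(t)) (B − b₂(t)) for almost every t ∈ [0,T], then B(t) ≥ min{ B₀, inf_{t∈[0,T]} b₁(t) } for all t ∈ [0,T]. -/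
open Set MeasureTheory

/-- Let `T > 0` and `a, b₁, b₂ : [0,T] → ℝ` be continuous and bounded with
`a(t) > 0` and `b₁(t) ≤ b₂(t)`. If `B : [0,T] → ℝ` is locally absolutely continuous with
`B(0) = B₀` and satisfies `dB/dt ≥ a(t)(B − b₁(t))(B − b₂(t))` a.e. on `[0,T]`,
then `B(t) ≥ min{B₀, inf_{[0,T]} b₁}` on `[0,T]`.
(Local absolute continuity is encoded via the FTC representation `B t = B₀ + ∫₀ᵗ φ`
with `φ` locally integrable, `φ` being the a.e. derivative of `B`.) -/
theorem riccati_inequality_lower_bound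
    (T : ℝ) (hT : 0 < T) (a b₁ b₂ : ℝ → ℝ)
    (hacont : ContinuousOn a (Icc 0 T)) (hb₁cont : ContinuousOn b₁ (Icc 0 T))
    (hb₂cont : ContinuousOn b₂ (Icc 0 T))
    (hbdd : ∃ C, ∀ t ∈ Icc (0 : ℝ) T, |a t| ≤ C ∧ |b₁ t| ≤ C ∧ |b₂ t| ≤ C)
    (hapos : ∀ t ∈ Icc (0 : ℝ) T, 0 < a t)
    (hb₁b₂ : ∀ t ∈ Icc (0 : ℝ) T, b₁ t ≤ b₂ t)
    (B₀ : ℝ) (B φ : ℝ → ℝ) (hB0 : B 0 = B₀)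
    (hint : ∀ t ∈ Icc (0 : ℝ) T, IntervalIntegrable φ volume 0 t)
    (hftc : ∀ t ∈ Icc (0 : ℝ) T, B t = B₀ + ∫ s in (0 : ℝ)..t, φ s)
    (hineq : ∀ᵐ t, t ∈ Icc (0 : ℝ) T → a t * (B t - b₁ t) * (B t - b₂ t) ≤ φ t) :
    ∀ t ∈ Icc (0 : ℝ) T, min B₀ (⨅ s : Icc (0 : ℝ) T, b₁ s) ≤ B t := by
  obtain ⟨C, hC⟩ := hbdd
  set m := min B₀ (⨅ s : Icc (0 : ℝ) T, b₁ s) with hm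
  have hbddb₁ : BddBelow (range fun s : Icc (0 : ℝ) T => b₁ s) := by
    refine ⟨-C, ?_⟩
    rintro x ⟨s, rfl⟩
    have := (hC s s.2).2.1
    have := abs_le.mp this
    linarith [this.1]
  have hmb₁ : ∀ t ∈ Icc (0 : ℝ) T, m ≤ b₁ t := fun t ht =>
    le_trans (min_le_right _ _) (ciInf_le hbddb₁ ⟨t, ht⟩)
  have hφint : IntegrableOn φ (Icc (0 : ℝ) T) := by
    have h := hint T ⟨le_refl 0 |>.trans hT.le, le_refl T⟩
    rw [integrableOn_Icc_iff_integrableOn_Ioc]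
    exact h.1
  have hBcont : ContinuousOn B (Icc (0 : ℝ) T) := by
    have h0 : ContinuousOn (fun t => ∫ s in (0 : ℝ)..t, φ s) (Icc 0 T) := by
      have h := intervalIntegral.continuousOn_primitive_interval
        (a := 0) (b := T) (μ := volume) (f := φ) (by rwa [uIcc_of_le hT.le])
      rwa [uIcc_of_le hT.le] at h
    have h1 : ContinuousOn (fun t => B₀ + ∫ s in (0 : ℝ)..t, φ s) (Icc 0 T) :=
      continuousOn_const.add h0
    exact h1.congr (fun t ht => hftc t ht)
  intro t₂ ht₂
  by_contra hlt
  push_neg at hlt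
  set S : Set ℝ := Icc 0 t₂ ∩ B ⁻¹' Ici m with hS
  have hm0 : m ≤ B₀ := min_le_left _ _
  have h0S : (0 : ℝ) ∈ S := ⟨⟨le_refl 0, ht₂.1⟩, by simpa [hB0] using hm0⟩
  have hSne : S.Nonempty := ⟨0, h0S⟩
  have hSbdd : BddAbove S := ⟨t₂, fun x hx => hx.1.2⟩
  have hclosed : IsClosed S := by
    have hc : ContinuousOn B (Icc 0 t₂) := hBcont.mono (Icc_subset_Icc le_rfl ht₂.2)
    exact hc.preimage_isClosed_of_isClosed isClosed_Icc isClosed_Ici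
  set s₀ := sSup S with hs₀def
  have hs₀S : s₀ ∈ S := hclosed.csSup_mem hSne hSbdd
  have hs₀t₂ : s₀ ≤ t₂ := hs₀S.1.2
  have hs₀0 : 0 ≤ s₀ := hs₀S.1.1
  have hs₀T : s₀ ∈ Icc (0 : ℝ) T := ⟨hs₀0, hs₀t₂.trans ht₂.2⟩
  have hBs₀ : m ≤ B s₀ := hs₀S.2
  have hbelow : ∀ t ∈ Ioc s₀ t₂, B t < m := by
    intro t ht
    by_contra h
    push_neg at h
    have htS : t ∈ S := ⟨⟨hs₀0.trans ht.1.le, ht.2⟩, h⟩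
    exact absurd (le_csSup hSbdd htS) (not_le.mpr ht.1)
  have hnonneg : 0 ≤ᵐ[volume.restrict (Icc s₀ t₂)] φ := by
    rw [← Measure.restrict_congr_set Ioc_ae_eq_Icc]
    filter_upwards [ae_restrict_of_ae hineq, ae_restrict_mem measurableSet_Ioc]
      with t h1 h2
    have htT : t ∈ Icc (0 : ℝ) T := ⟨hs₀0.trans h2.1.le, h2.2.trans ht₂.2⟩
    have hBt := hbelow t h2
    have hb1 := hmb₁ t htT
    have hb2 := hb₁b₂ t htT
    have ha := hapos t htT
    have h3 := h1 htT
    have h4 : 0 < a t * ((B t - b₁ t) * (B t - b₂ t)) :=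
      mul_pos ha (mul_pos_of_neg_of_neg (by linarith) (by linarith))
    show (0 : ℝ) ≤ φ t
    nlinarith [h4, h3, mul_assoc (a t) (B t - b₁ t) (B t - b₂ t)]
  have hnn : 0 ≤ ∫ s in s₀..t₂, φ s :=
    intervalIntegral.integral_nonneg_of_ae_restrict hs₀t₂ hnonneg
  have hii : IntervalIntegrable φ volume s₀ t₂ :=
    (hint s₀ hs₀T).symm.trans (hint t₂ ht₂)
  have hsplit : (∫ s in (0 : ℝ)..s₀, φ s) + ∫ s in s₀..t₂, φ s = ∫ s in (0 : ℝ)..t₂, φ s :=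
    intervalIntegral.integral_add_adjacent_intervals (hint s₀ hs₀T) hii
  have hBt₂ : B t₂ = B s₀ + ∫ s in s₀..t₂, φ s := by
    rw [hftc t₂ ht₂, hftc s₀ hs₀T, ← hsplit]; ring
  linarith
end

section
/- For all real numbers u ∈ [0,1], v ∈ [−1,1], and every N₀ ≤ 0, one has ( −( 2(1−2u)v − u(1−u) ) + √( ( 2(1−2u)v − u(1−u) )² + 8 u(1−u)( v² − N₀ ) ) ) / 4 ≤ 1/2 + (√2/4)·√(3 − N₀). In particular, max over (u,v) ∈ [0,1]×[−1,1] of ( −2(1−2u)v + u(1−u) ) equals 2, and 8u(1−u)(v² − N₀) ≤ 2(1 − N₀) on this region. -/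
/-- For all `u ∈ [0,1]`, `v ∈ [−1,1]` and `N₀ ≤ 0`, the larger root
`M₂` of the quadratic arising in the gradient dynamics of the traffic flow model with
constant interaction potential is bounded above by `1/2 + (√2/4)√(3 − N₀)`.
In particular, the maximum of `−2(1−2u)v + u(1−u)` over `[0,1]×[−1,1]` equals `2`,
and `8u(1−u)(v² − N₀) ≤ 2(1 − N₀)` on this region. -/
theorem upper_bound_M2_constant_potential :
    (∀ u v N₀ : ℝ, u ∈ Set.Icc (0 : ℝ) 1 → v ∈ Set.Icc (-1 : ℝ) 1 → N₀ ≤ 0 →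
      (-(2*(1 - 2*u)*v - u*(1 - u))
        + Real.sqrt ((2*(1 - 2*u)*v - u*(1 - u))^2 + 8*u*(1 - u)*(v^2 - N₀))) / 4
      ≤ 1/2 + (Real.sqrt 2 / 4) * Real.sqrt (3 - N₀)) ∧
    IsGreatest ((fun p : ℝ × ℝ => -2*(1 - 2*p.1)*p.2 + p.1*(1 - p.1)) ''
      (Set.Icc (0 : ℝ) 1 ×ˢ Set.Icc (-1 : ℝ) 1)) 2 ∧
    (∀ u v N₀ : ℝ, u ∈ Set.Icc (0 : ℝ) 1 → v ∈ Set.Icc (-1 : ℝ) 1 → N₀ ≤ 0 →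
      8*u*(1 - u)*(v^2 - N₀) ≤ 2*(1 - N₀)) := by
  refine ⟨?_, ⟨⟨(0, -1), ⟨⟨le_refl _, by norm_num⟩, ⟨by norm_num, by norm_num⟩⟩,
      by norm_num⟩, ?_⟩, ?_⟩
  · intro u v N₀ ⟨hu0, hu1⟩ ⟨hv0, hv1⟩ hN
    set A := 2*(1 - 2*u)*v - u*(1 - u) with hA
    set B := 8*u*(1 - u)*(v^2 - N₀) with hB
    have hA2 : -2 ≤ A := by
      nlinarith [mul_nonneg (mul_nonneg hu0 (by linarith : (0:ℝ) ≤ 1 - u)) (by linarith : (0:ℝ) ≤ 1 - v),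
        mul_nonneg (mul_nonneg hu0 (by linarith : (0:ℝ) ≤ 1 - u)) (by linarith : (0:ℝ) ≤ 1 + v),
        mul_nonneg (by linarith : (0:ℝ) ≤ 1 + v) (sq_nonneg (1 - 2*u)),
        mul_nonneg (by linarith : (0:ℝ) ≤ 1 - v) (sq_nonneg (1 - 2*u))]
    have hB0 : 0 ≤ B := by
      have : 0 ≤ v^2 - N₀ := by nlinarith [sq_nonneg v]
      have h2 : 0 ≤ u * (1 - u) := mul_nonneg hu0 (by linarith)
      nlinarith
    have hBle : B ≤ 2 - 2*N₀ := by
      nlinarith [mul_nonneg (neg_nonneg.2 hN) (sq_nonneg (2*u - 1)),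
        mul_nonneg (mul_nonneg hu0 (by linarith : (0:ℝ) ≤ 1 - u)) (by nlinarith : (0:ℝ) ≤ 1 - v^2),
        sq_nonneg ((2*u - 1)*v)]
    have hs3 : 0 ≤ Real.sqrt (3 - N₀) := Real.sqrt_nonneg _
    have hs2 : 0 ≤ Real.sqrt 2 := Real.sqrt_nonneg _
    have h2 : (Real.sqrt 2)^2 = 2 := Real.sq_sqrt (by norm_num)
    have h3 : (Real.sqrt (3 - N₀))^2 = 3 - N₀ := Real.sq_sqrt (by linarith)
    have key : Real.sqrt (A^2 + B) ≤ 2 + Real.sqrt 2 * Real.sqrt (3 - N₀) + A := by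
      have h1 : A^2 + B ≤ (2 + Real.sqrt 2 * Real.sqrt (3 - N₀) + A)^2 := by
        nlinarith [mul_nonneg (mul_nonneg hs2 hs3) (by linarith : (0:ℝ) ≤ 2 + A),
          mul_nonneg hs2 hs3]
      calc Real.sqrt (A^2 + B) ≤ Real.sqrt ((2 + Real.sqrt 2 * Real.sqrt (3 - N₀) + A)^2) :=
            Real.sqrt_le_sqrt h1
        _ = 2 + Real.sqrt 2 * Real.sqrt (3 - N₀) + A := by
            rw [Real.sqrt_sq (by nlinarith [mul_nonneg hs2 hs3])]
    linarith
  · rintro x ⟨⟨u, v⟩, ⟨⟨hu0, hu1⟩, hv0, hv1⟩, rfl⟩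
    simp only
    nlinarith [mul_nonneg (by linarith : (0:ℝ) ≤ 1 + v) (sq_nonneg (1 - 2*u)),
      mul_nonneg (by linarith : (0:ℝ) ≤ 1 - v) (sq_nonneg (1 - 2*u)),
      mul_nonneg (mul_nonneg hu0 (by linarith : (0:ℝ) ≤ 1 - u)) (by linarith : (0:ℝ) ≤ 1 - v),
      mul_nonneg (mul_nonneg hu0 (by linarith : (0:ℝ) ≤ 1 - u)) (by linarith : (0:ℝ) ≤ 1 + v)]
  · intro u v N₀ ⟨hu0, hu1⟩ ⟨hv0, hv1⟩ hN
    nlinarith [mul_nonneg (neg_nonneg.2 hN) (sq_nonneg (2*u - 1)),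
      mul_nonneg (mul_nonneg hu0 (by linarith : (0:ℝ) ≤ 1 - u)) (by nlinarith : (0:ℝ) ≤ 1 - v^2),
      sq_nonneg ((2*u - 1)*v)]
end

section
/- For all real numbers u ∈ [0,1], v ∈ [−2,2], and every N₀ ≤ 0, one has ( −( 2(1−2u)v − 2u(1−u) ) + √( ( 2(1−2u)v − 2u(1−u) )² + 8 u(1−u)( v² − 2N₀ ) ) ) / 4 ≤ 1 + (1/2)·√(6 − N₀). In particular, max over (u,v) ∈ [0,1]×[−2,2] of ( −2(1−2u)v + 2u(1−u) ) equals 4, and 8u(1−u)(v² − 2N₀) ≤ 2(4 − 2N₀) on this region. -/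
lemma negA_le_four {u v : ℝ} (hu0 : 0 ≤ u) (hu1 : u ≤ 1) (hv0 : -2 ≤ v) (hv1 : v ≤ 2) :
    -(2*(1 - 2*u)*v - 2*u*(1 - u)) ≤ 4 := by
  nlinarith [mul_nonneg hu0 (sub_nonneg.2 hu1), mul_nonneg (sub_nonneg.2 hu1) (sub_nonneg.2 hv1),
    mul_nonneg hu0 (by linarith : (0:ℝ) ≤ v + 2), mul_nonneg (sub_nonneg.2 hu1) (by linarith : (0:ℝ) ≤ v + 2),
    mul_nonneg hu0 (sub_nonneg.2 hv1)]

/-- For all `u ∈ [0,1]`, `v ∈ [−2,2]` and `N₀ ≤ 0`, the larger root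
`M₂` of the quadratic arising in the gradient dynamics of the traffic flow model with
linear interaction potential is bounded above by `1 + (1/2)√(6 − N₀)`.
In particular, the maximum of `−2(1−2u)v + 2u(1−u)` over `[0,1]×[−2,2]` equals `4`,
and `8u(1−u)(v² − 2N₀) ≤ 2(4 − 2N₀)` on this region. -/
theorem upper_bound_M2_linear_potential :
    (∀ u v N₀ : ℝ, u ∈ Set.Icc (0 : ℝ) 1 → v ∈ Set.Icc (-2 : ℝ) 2 → N₀ ≤ 0 →
      (-(2*(1 - 2*u)*v - 2*u*(1 - u))
        + Real.sqrt ((2*(1 - 2*u)*v - 2*u*(1 - u))^2 + 8*u*(1 - u)*(v^2 - 2*N₀))) / 4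
      ≤ 1 + (1/2) * Real.sqrt (6 - N₀)) ∧
    IsGreatest ((fun p : ℝ × ℝ => -2*(1 - 2*p.1)*p.2 + 2*p.1*(1 - p.1)) ''
      (Set.Icc (0 : ℝ) 1 ×ˢ Set.Icc (-2 : ℝ) 2)) 4 ∧
    (∀ u v N₀ : ℝ, u ∈ Set.Icc (0 : ℝ) 1 → v ∈ Set.Icc (-2 : ℝ) 2 → N₀ ≤ 0 →
      8*u*(1 - u)*(v^2 - 2*N₀) ≤ 2*(4 - 2*N₀)) := by
  refine ⟨?_, ⟨?_, ?_⟩, ?_⟩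
  · rintro u v N₀ ⟨hu0, hu1⟩ ⟨hv0, hv1⟩ hN
    set A : ℝ := 2*(1 - 2*u)*v - 2*u*(1 - u) with hA
    set s : ℝ := Real.sqrt (6 - N₀) with hs
    have hs0 : 0 ≤ s := Real.sqrt_nonneg _
    have hs2 : s^2 = 6 - N₀ := Real.sq_sqrt (by linarith)
    have hA4 : -A ≤ 4 := negA_le_four hu0 hu1 hv0 hv1
    have hB : 8*u*(1 - u)*(v^2 - 2*N₀) ≤ 8 - 4*N₀ := by
      nlinarith [sq_nonneg (1 - 2*u), sq_nonneg v, mul_nonneg hu0 (sub_nonneg.2 hu1),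
        mul_nonneg (mul_nonneg hu0 (sub_nonneg.2 hu1)) (sq_nonneg v),
        mul_nonneg (mul_nonneg hu0 (sub_nonneg.2 hu1)) (neg_nonneg.2 hN)]
    have hR : (0:ℝ) ≤ 4 + A + 2*s := by linarith
    have hsq : A^2 + 8*u*(1 - u)*(v^2 - 2*N₀) ≤ (4 + A + 2*s)^2 := by
      nlinarith [mul_nonneg (by linarith : (0:ℝ) ≤ 4 + A) hs0]
    have h1 : Real.sqrt (A^2 + 8*u*(1 - u)*(v^2 - 2*N₀)) ≤ 4 + A + 2*s := by
      calc Real.sqrt (A^2 + 8*u*(1 - u)*(v^2 - 2*N₀)) ≤ Real.sqrt ((4 + A + 2*s)^2) :=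
            Real.sqrt_le_sqrt hsq
        _ = 4 + A + 2*s := Real.sqrt_sq hR
    linarith
  · exact ⟨((0:ℝ), (-2:ℝ)), by norm_num⟩
  · rintro x ⟨⟨u, v⟩, hmem, rfl⟩
    obtain ⟨⟨hu0, hu1⟩, hv0, hv1⟩ := Set.mem_prod.1 hmem
    have := negA_le_four hu0 hu1 hv0 hv1
    simp only
    linarith
  · rintro u v N₀ ⟨hu0, hu1⟩ ⟨hv0, hv1⟩ hN
    nlinarith [sq_nonneg (1 - 2*u), sq_nonneg v, mul_nonneg hu0 (sub_nonneg.2 hu1),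
      mul_nonneg (mul_nonneg hu0 (sub_nonneg.2 hu1)) (sq_nonneg v),
      mul_nonneg (mul_nonneg hu0 (sub_nonneg.2 hu1)) (neg_nonneg.2 hN)]
end

section
/- Let γ > 0 and let u : [0,T)×ℝ → ℝ be a solution of the traffic flow model ∂_t u + ∂_x (u(1−u) e^{−ū}) = 0, where ū(t,x) = (1/γ)∫_x^{x+γ} u(t,y) dy, such that u is C¹ and d := ∂_x u is itself C¹ on [0,T)×ℝ. Then d satisfies pointwise the equation ∂_t d + (1−2u) e^{−ū} ∂_x d = e^{−ū} [ 2d² + 2(1−2u) ū_x d − u(1−u) (ū_x)² + u(1−u) ū_{xx} ], where ū_x(t,x) = ( u(t,x+γ) − u(t,x) ) / γ and ū_{xx}(t,x) = ( ∂_x u(t,x+γ) − ∂_x u(t,x) ) / γ. -/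
open Set

/-- The nonlocal average `ū(t,x) = (1/γ)∫_x^{x+γ} u(t,y) dy`. -/
noncomputable def ubar (γ : ℝ) (u : ℝ → ℝ → ℝ) (t x : ℝ) : ℝ :=
  (1/γ) * ∫ y in x..(x + γ), u t y

/-- slice regularity -/
theorem slice_contDiff {T : ℝ} {v : ℝ → ℝ → ℝ}
    (hv : ContDiffOn ℝ 1 (Function.uncurry v) (Ico 0 T ×ˢ univ))
    {t : ℝ} (ht : t ∈ Ico 0 T) : ContDiff ℝ 1 (v t) := by
  rw [← contDiffOn_univ]
  exact hv.comp ((contDiff_const.prodMk contDiff_id).contDiffOn)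
    (fun y _ => ⟨ht, mem_univ y⟩)

/-- derivative of ubar in x -/
theorem hasDerivAt_ubar {γ : ℝ} {u : ℝ → ℝ → ℝ} {t : ℝ} (hc : Continuous (u t)) (x : ℝ) :
    HasDerivAt (fun y => ubar γ u t y) ((u t (x + γ) - u t x)/γ) x := by
  have hΨ : ∀ r : ℝ, HasDerivAt (fun r => ∫ z in (0:ℝ)..r, u t z) (u t r) r := fun r =>
    intervalIntegral.integral_hasDerivAt_right (hc.intervalIntegrable 0 r)
      (hc.stronglyMeasurableAtFilter _ _) hc.continuousAt
  have heq : (fun y => ubar γ u t y)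
      = fun y => (1/γ) * ((∫ z in (0:ℝ)..(y+γ), u t z) - ∫ z in (0:ℝ)..y, u t z) := by
    funext y
    rw [ubar, intervalIntegral.integral_interval_sub_left (hc.intervalIntegrable 0 (y+γ))
      (hc.intervalIntegrable 0 y)]
  rw [heq]
  have h1 : HasDerivAt (fun y : ℝ => ∫ z in (0:ℝ)..(y+γ), u t z) (u t (x+γ)) x := by
    have := (hΨ (x+γ)).comp x ((hasDerivAt_id x).add_const γ)
    simpa [Function.comp_def] using this
  have := ((h1.sub (hΨ x)).const_mul (1/γ))
  exact this.congr_deriv (by ring)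

theorem hasDerivAt_B {γ : ℝ} {u : ℝ → ℝ → ℝ} {t : ℝ} (hc : Continuous (u t)) (x : ℝ) :
    HasDerivAt (fun y => Real.exp (-(ubar γ u t y)))
      (Real.exp (-(ubar γ u t x)) * (-((u t (x + γ) - u t x)/γ))) x :=
  ((hasDerivAt_ubar hc x).neg).exp

theorem hasDerivAt_F {γ : ℝ} {u : ℝ → ℝ → ℝ} {t : ℝ} (hc : ContDiff ℝ 1 (u t)) (x : ℝ) :
    HasDerivAt (fun y => u t y * (1 - u t y) * Real.exp (-(ubar γ u t y)))
      (Real.exp (-(ubar γ u t x)) * (deriv (u t) x * (1 - 2*u t x)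
        - u t x * (1 - u t x) * ((u t (x + γ) - u t x)/γ))) x := by
  have hf : ∀ y, HasDerivAt (u t) (deriv (u t) y) y := fun y =>
    (hc.differentiable one_ne_zero y).hasDerivAt
  have h := ((hf x).mul ((hasDerivAt_const x (1:ℝ)).sub (hf x))).mul
    (hasDerivAt_B (γ := γ) hc.continuous x)
  exact h.congr_deriv (by simp only [Pi.mul_apply, Pi.sub_apply]; ring)

theorem hasDerivAt_G {γ : ℝ} {u : ℝ → ℝ → ℝ} {t : ℝ} (hc : ContDiff ℝ 1 (u t))
    (hgd : ContDiff ℝ 1 (fun y => deriv (u t) y)) (x : ℝ) :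
    HasDerivAt (fun y => Real.exp (-(ubar γ u t y)) * (deriv (u t) y * (1 - 2*u t y)
        - u t y * (1 - u t y) * ((u t (y + γ) - u t y)/γ)))
      (Real.exp (-(ubar γ u t x)) *
        ((1 - 2*u t x) * deriv (fun y => deriv (u t) y) x
          - 2 * (deriv (u t) x)^2
          - 2 * (1 - 2*u t x) * ((u t (x + γ) - u t x)/γ) * deriv (u t) x
          + u t x * (1 - u t x) * ((u t (x + γ) - u t x)/γ)^2
          - u t x * (1 - u t x) * ((deriv (u t) (x + γ) - deriv (u t) x)/γ))) x := by
  have hf : ∀ y, HasDerivAt (u t) (deriv (u t) y) y := fun y =>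
    (hc.differentiable one_ne_zero y).hasDerivAt
  have hg : HasDerivAt (fun y => deriv (u t) y) (deriv (fun y => deriv (u t) y) x) x :=
    (hgd.differentiable one_ne_zero x).hasDerivAt
  have hshift : HasDerivAt (fun y => u t (y + γ)) (deriv (u t) (x + γ)) x := by
    have := (hf (x + γ)).comp x ((hasDerivAt_id x).add_const γ)
    simpa [Function.comp_def] using this
  have hux : HasDerivAt (fun y => (u t (y + γ) - u t y)/γ)
      ((deriv (u t) (x + γ) - deriv (u t) x)/γ) x := by
    have := (hshift.sub (hf x)).div_const γ
    simpa using this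
  have h := (hasDerivAt_B (γ := γ) hc.continuous x).mul
    ((hg.mul ((hasDerivAt_const x (1:ℝ)).sub ((hf x).const_mul 2))).sub
      (((hf x).mul ((hasDerivAt_const x (1:ℝ)).sub (hf x))).mul hux))
  exact h.congr_deriv (by simp only [Pi.mul_apply, Pi.sub_apply]; ring)

/-- if `u` is a `C¹` solution of the traffic flow model
`∂ₜu + ∂ₓ(u(1−u)e^{−ū}) = 0` on `(0,T)×ℝ` whose gradient `d = ∂ₓu` is itself `C¹`,
then `d` satisfies pointwise
`∂ₜd + (1−2u)e^{−ū}∂ₓd = e^{−ū}[2d² + 2(1−2u)ū_x d − u(1−u)(ū_x)² + u(1−u)ū_xx]`,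
where `ū_x = (u(t,x+γ)−u(t,x))/γ` and `ū_xx = (∂ₓu(t,x+γ)−∂ₓu(t,x))/γ`. -/
theorem gradient_dynamics_constant_potential
    (γ T : ℝ) (hγ : 0 < γ) (hT : 0 < T) (u : ℝ → ℝ → ℝ)
    (hu : ContDiffOn ℝ 1 (Function.uncurry u) (Ico 0 T ×ˢ univ))
    (hd : ContDiffOn ℝ 1 (Function.uncurry fun t x => deriv (u t) x) (Ico 0 T ×ˢ univ))
    (hPDE : ∀ t x : ℝ, t ∈ Ioo 0 T →
      deriv (fun s => u s x) t +
        deriv (fun y => u t y * (1 - u t y) * Real.exp (-(ubar γ u t y))) x = 0) :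
    ∀ t x : ℝ, t ∈ Ioo 0 T →
      deriv (fun s => deriv (u s) x) t
        + (1 - 2 * u t x) * Real.exp (-(ubar γ u t x)) * deriv (fun y => deriv (u t) y) x
      = Real.exp (-(ubar γ u t x)) *
          (2 * (deriv (u t) x)^2
            + 2 * (1 - 2 * u t x) * ((u t (x + γ) - u t x)/γ) * deriv (u t) x
            - u t x * (1 - u t x) * ((u t (x + γ) - u t x)/γ)^2
            + u t x * (1 - u t x) * ((deriv (u t) (x + γ) - deriv (u t) x)/γ)) := by
  intro t x ht
  have htIco : t ∈ Ico 0 T := ⟨le_of_lt ht.1, ht.2⟩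
  set O : Set (ℝ × ℝ) := Ioo 0 T ×ˢ (univ : Set ℝ) with hOdef
  have hO : IsOpen O := isOpen_Ioo.prod isOpen_univ
  have hOsub : O ⊆ Ico 0 T ×ˢ (univ : Set ℝ) :=
    prod_mono_left Ioo_subset_Ico_self
  set Dfun : ℝ × ℝ → ℝ := Function.uncurry fun s y => deriv (u s) y with hDdef
  have hdO : ContDiffOn ℝ 1 Dfun O := hd.mono hOsub
  -- joint differentiability of Dfun on O
  have hDdiff : ∀ p ∈ O, HasFDerivAt Dfun (fderiv ℝ Dfun p) p := fun p hp =>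
    (((hdO.differentiableOn one_ne_zero).differentiableAt (hO.mem_nhds hp))).hasFDerivAt
  set h : ℝ → ℝ → ℝ := fun s y => (fderiv ℝ Dfun (s, y)) (1, 0) with hhdef
  -- time derivative of d
  have hDt : ∀ s ∈ Ioo 0 T, ∀ y : ℝ,
      HasDerivAt (fun s' => deriv (u s') y) (h s y) s := by
    intro s hs y
    have hp : (s, y) ∈ O := ⟨hs, mem_univ y⟩
    have := (hDdiff (s, y) hp).comp_hasDerivAt s
      ((hasDerivAt_id s).prodMk (hasDerivAt_const s y))
    exact this
  -- continuity of h on O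
  have hcont_h : ContinuousOn (fun p : ℝ × ℝ => h p.1 p.2) O := by
    exact (hdO.continuousOn_fderiv_of_isOpen hO le_rfl).clm_apply
      (continuousOn_const (c := ((1:ℝ), (0:ℝ))))
  have hcont_ht : Continuous (fun y => h t y) := by
    have : Continuous (fun y : ℝ => ((t, y) : ℝ × ℝ)) := continuous_const.prodMk continuous_id
    exact hcont_h.comp_continuous this (fun y => ⟨ht, mem_univ y⟩)
  -- slice regularity
  have hslice_u : ∀ s ∈ Ico 0 T, ContDiff ℝ 1 (u s) := fun s hs => slice_contDiff hu hs
  have hslice_g : ∀ s ∈ Ico 0 T, ContDiff ℝ 1 (fun y => deriv (u s) y) := fun s hs =>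
    slice_contDiff hd hs
  have huderiv : ∀ s ∈ Ico 0 T, ∀ z : ℝ, HasDerivAt (u s) (deriv (u s) z) z := fun s hs z =>
    ((hslice_u s hs).differentiable one_ne_zero z).hasDerivAt
  -- time derivative of u
  set w : ℝ → ℝ := fun y => deriv (fun s => u s y) t with hwdef
  have hw : ∀ y : ℝ, HasDerivAt (fun s => u s y) (w y) t := by
    intro y
    have hp : ((t, y) : ℝ × ℝ) ∈ O := ⟨ht, mem_univ y⟩
    have hud := ((hu.mono hOsub).differentiableOn one_ne_zero).differentiableAt (hO.mem_nhds hp)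
    have h2 : HasDerivAt (fun s => u s y) (fderiv ℝ (Function.uncurry u) (t, y) (1, 0)) t := by
      have := (hud.hasFDerivAt).comp_hasDerivAt t
        ((hasDerivAt_id t).prodMk (hasDerivAt_const t y))
      exact this
    have hda : DifferentiableAt ℝ (fun s => u s y) t := h2.differentiableAt
    have : w y = deriv (fun s => u s y) t := rfl
    rw [this]
    exact hda.hasDerivAt
  -- key integral representation
  have key : ∀ y : ℝ, w y - w x = ∫ z in x..y, h t z := by
    intro y
    set ε : ℝ := min (t/2) ((T - t)/2) with hεdef
    have hε : 0 < ε := lt_min (by linarith [ht.1]) (by linarith [ht.2])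
    have hball : ∀ s ∈ Metric.ball t ε, s ∈ Ioo 0 T := by
      intro s hs
      rw [Metric.mem_ball, Real.dist_eq, abs_lt] at hs
      constructor
      · have : ε ≤ t/2 := min_le_left _ _
        linarith [ht.1]
      · have : ε ≤ (T - t)/2 := min_le_right _ _
        linarith [ht.2]
    -- compact bound
    have hKsub : Icc (t - ε) (t + ε) ×ˢ uIcc x y ⊆ O := by
      rintro ⟨s, z⟩ ⟨hs, -⟩
      refine ⟨⟨?_, ?_⟩, mem_univ z⟩
      · have h1 : ε ≤ t/2 := min_le_left _ _
        have := hs.1; simp only [mem_Icc] at hs; linarith [ht.1, hs.1]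
      · have h2 : ε ≤ (T - t)/2 := min_le_right _ _
        simp only [mem_Icc] at hs; linarith [ht.2, hs.2]
    obtain ⟨C, hC⟩ := (isCompact_Icc.prod isCompact_uIcc).exists_bound_of_continuousOn
      (hcont_h.mono hKsub)
    have hleib := intervalIntegral.hasDerivAt_integral_of_dominated_loc_of_deriv_le
      (F := fun s z => deriv (u s) z) (F' := fun s z => h s z) (bound := fun _ => C)
      (a := x) (b := y) (x₀ := t) (μ := MeasureTheory.volume) (Metric.ball_mem_nhds t hε)
      ?_ ?_ ?_ ?_ ?_ ?_
    · -- conclude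
      have hDeriv : HasDerivAt (fun s => ∫ z in x..y, deriv (u s) z)
          (∫ z in x..y, h t z) t := hleib.2
      have heq : (fun s => u s y - u s x) =ᶠ[nhds t] (fun s => ∫ z in x..y, deriv (u s) z) := by
        filter_upwards [isOpen_Ioo.mem_nhds ht] with s hs
        have hsIco : s ∈ Ico 0 T := ⟨le_of_lt hs.1, hs.2⟩
        rw [intervalIntegral.integral_eq_sub_of_hasDerivAt
          (fun z _ => huderiv s hsIco z)
          (((hslice_g s hsIco).continuous).intervalIntegrable x y)]
      have hDeriv2 : HasDerivAt (fun s => u s y - u s x) (∫ z in x..y, h t z) t :=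
        hDeriv.congr_of_eventuallyEq heq
      exact ((hw y).sub (hw x)).unique hDeriv2
    · -- hF_meas
      filter_upwards [isOpen_Ioo.mem_nhds ht] with s hs
      exact (((hslice_g s ⟨le_of_lt hs.1, hs.2⟩).continuous).aestronglyMeasurable).restrict
    · exact ((hslice_g t htIco).continuous).intervalIntegrable x y
    · exact (hcont_ht.aestronglyMeasurable).restrict
    · -- bound
      refine Filter.Eventually.of_forall (fun z hz s hs => ?_)
      refine hC (s, z) ⟨?_, uIoc_subset_uIcc hz⟩
      rw [Metric.mem_ball, Real.dist_eq, abs_lt] at hs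
      exact ⟨by linarith [hs.1], by linarith [hs.2]⟩
    · exact intervalIntegrable_const
    · exact Filter.Eventually.of_forall (fun z hz s hs => hDt s (hball s hs) z)
  -- PDE: w = -G
  set G : ℝ → ℝ := fun y => Real.exp (-(ubar γ u t y)) * (deriv (u t) y * (1 - 2*u t y)
      - u t y * (1 - u t y) * ((u t (y + γ) - u t y)/γ)) with hGdef
  have hwG : ∀ y : ℝ, w y = -(G y) := by
    intro y
    have hp := hPDE t y ht
    have := (hasDerivAt_F (γ := γ) (hslice_u t htIco) y).deriv
    rw [this] at hp
    have hwy : w y = deriv (fun s => u s y) t := rfl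
    rw [hwy]
    simp only [hGdef]
    linarith
  -- differentiate key at x
  have hfun : (fun y => -(G y)) = fun y => w x + ∫ z in x..y, h t z := by
    funext y
    rw [← hwG y]
    have := key y
    linarith
  have hGd : HasDerivAt (fun y => -(G y))
      (-(Real.exp (-(ubar γ u t x)) *
        ((1 - 2*u t x) * deriv (fun y => deriv (u t) y) x
          - 2 * (deriv (u t) x)^2
          - 2 * (1 - 2*u t x) * ((u t (x + γ) - u t x)/γ) * deriv (u t) x
          + u t x * (1 - u t x) * ((u t (x + γ) - u t x)/γ)^2
          - u t x * (1 - u t x) * ((deriv (u t) (x + γ) - deriv (u t) x)/γ)))) x :=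
    (hasDerivAt_G (γ := γ) (hslice_u t htIco) (hslice_g t htIco) x).neg
  have hInt : HasDerivAt (fun y => w x + ∫ z in x..y, h t z) (h t x) x :=
    (intervalIntegral.integral_hasDerivAt_right (hcont_ht.intervalIntegrable x x)
      (hcont_ht.stronglyMeasurableAtFilter _ _) hcont_ht.continuousAt).const_add (w x)
  rw [hfun] at hGd
  have hhtx := hInt.unique hGd
  have hfinal := (hDt t ht x).deriv
  rw [hfinal, hhtx]
  ring
end

section
/- Let γ > 0 and let u : [0,T)×ℝ → ℝ be a C¹ solution of the traffic flow model ∂_t u + ∂_x (u(1−u) e^{−ū}) = 0, where ū(t,x) = (1/γ)∫_x^{x+γ} u(t,y) dy, with ∂_x u C¹, 0 ≤ u(t,x) ≤ 1 for all (t,x), and such that for each t ∈ [0,T) the infimum N(t) := inf_{x∈ℝ} ∂_x u(t,x) is attained at some point η(t) and t ↦ N(t) is locally Lipschitz. Then N(t) ≥ min{ N(0), −1/γ } for all t ∈ [0,T). -/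
open Set

open MeasureTheory Filter Topology intervalIntegral

section TrafficAux
variable {T : ℝ} {f : ℝ → ℝ → ℝ}

lemma traffic_mem_s {t x : ℝ} (ht : t ∈ Ico 0 T) :
    ((t, x) : ℝ × ℝ) ∈ Ico 0 T ×ˢ (univ : Set ℝ) := ⟨ht, mem_univ x⟩

lemma traffic_slice_diff_x (hf : ContDiffOn ℝ 1 (Function.uncurry f) (Ico 0 T ×ˢ univ))
    {t : ℝ} (ht : t ∈ Ico 0 T) (x : ℝ) : DifferentiableAt ℝ (f t) x := by
  have h1 : DifferentiableWithinAt ℝ (Function.uncurry f) (Ico 0 T ×ˢ univ) (t, x) :=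
    (hf.differentiableOn one_ne_zero) _ (traffic_mem_s ht)
  have h2 : DifferentiableWithinAt ℝ (fun y : ℝ => ((t, y) : ℝ × ℝ)) univ x :=
    ((differentiableAt_const t).prodMk differentiableAt_id).differentiableWithinAt
  have h3 := h1.comp x h2 (fun y _ => traffic_mem_s ht)
  rw [differentiableWithinAt_univ] at h3
  exact h3

lemma traffic_slice_cont_x (hf : ContDiffOn ℝ 1 (Function.uncurry f) (Ico 0 T ×ˢ univ))
    {t : ℝ} (ht : t ∈ Ico 0 T) : Continuous (f t) := by
  have h2 : Continuous (fun y : ℝ => ((t, y) : ℝ × ℝ)) := continuous_const.prodMk continuous_id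
  have h3 : ContinuousOn (f t) univ :=
    hf.continuousOn.comp h2.continuousOn (fun y _ => traffic_mem_s ht)
  exact continuousOn_univ.1 h3

lemma traffic_joint_diff (hf : ContDiffOn ℝ 1 (Function.uncurry f) (Ico 0 T ×ˢ univ))
    {t x : ℝ} (ht : t ∈ Ioo 0 T) :
    DifferentiableAt ℝ (Function.uncurry f) (t, x) := by
  have hs : (Ico 0 T ×ˢ (univ : Set ℝ)) ∈ 𝓝 ((t, x) : ℝ × ℝ) := by
    rw [← mem_interior_iff_mem_nhds, interior_prod_eq, interior_Ico, interior_univ]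
    exact ⟨ht, mem_univ x⟩
  exact (hf.differentiableOn one_ne_zero).differentiableAt hs

lemma traffic_slice_deriv_t (hf : ContDiffOn ℝ 1 (Function.uncurry f) (Ico 0 T ×ˢ univ))
    {t : ℝ} (x : ℝ) (ht : t ∈ Ioo 0 T) :
    HasDerivAt (fun s => f s x) (fderiv ℝ (Function.uncurry f) (t, x) (1, 0)) t := by
  have h1 := (traffic_joint_diff hf (x := x) ht).hasFDerivAt
  have h2 : HasDerivAt (fun s : ℝ => ((s, x) : ℝ × ℝ)) ((1 : ℝ), (0 : ℝ)) t :=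
    (hasDerivAt_id t).prodMk (hasDerivAt_const t x)
  exact h1.comp_hasDerivAt t h2

lemma traffic_slice_diff_t (hf : ContDiffOn ℝ 1 (Function.uncurry f) (Ico 0 T ×ˢ univ))
    {t : ℝ} (x : ℝ) (ht : t ∈ Ioo 0 T) :
    DifferentiableAt ℝ (fun s => f s x) t :=
  (traffic_slice_deriv_t hf x ht).differentiableAt

lemma traffic_cont_w_joint (hf : ContDiffOn ℝ 1 (Function.uncurry f) (Ico 0 T ×ˢ univ)) :
    ContinuousOn (fun p : ℝ × ℝ => fderiv ℝ (Function.uncurry f) p ((1 : ℝ), (0 : ℝ)))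
      (Ioo 0 T ×ˢ univ) := by
  have hO : IsOpen (Ioo (0:ℝ) T ×ˢ (univ : Set ℝ)) := isOpen_Ioo.prod isOpen_univ
  have hsub : (Ioo (0:ℝ) T ×ˢ (univ : Set ℝ)) ⊆ Ico 0 T ×ˢ univ :=
    prod_mono Ioo_subset_Ico_self (subset_refl _)
  have hfd : ContinuousOn (fun p => fderiv ℝ (Function.uncurry f) p) (Ioo 0 T ×ˢ univ) :=
    (hf.mono hsub).continuousOn_fderiv_of_isOpen hO le_rfl
  exact (ContinuousLinearMap.apply ℝ ℝ ((1:ℝ), (0:ℝ))).continuous.comp_continuousOn hfd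

lemma traffic_cont_w (hf : ContDiffOn ℝ 1 (Function.uncurry f) (Ico 0 T ×ˢ univ))
    {t : ℝ} (ht : t ∈ Ioo 0 T) :
    Continuous (fun x => deriv (fun s => f s x) t) := by
  have h1 : (fun x => deriv (fun s => f s x) t)
      = fun x => fderiv ℝ (Function.uncurry f) (t, x) ((1:ℝ), (0:ℝ)) := by
    funext x
    exact (traffic_slice_deriv_t hf x ht).deriv
  rw [h1]
  have hι : Continuous fun x : ℝ => ((t, x) : ℝ × ℝ) := continuous_const.prodMk continuous_id
  have h2 : ContinuousOn (fun x : ℝ => fderiv ℝ (Function.uncurry f) (t, x) ((1:ℝ), (0:ℝ))) univ :=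
    (traffic_cont_w_joint hf).comp hι.continuousOn (fun x _ => ⟨ht, mem_univ x⟩)
  exact continuousOn_univ.1 h2

end TrafficAux

lemma traffic_key_algebra {γ N A c B : ℝ} (hγ : 0 < γ) (hN : N ≤ -(1/γ))
    (hA1 : -(1/γ) ≤ A) (hA2 : A ≤ 1/γ) (hc0 : 0 ≤ c) (hc1 : c ≤ 1) (hB : 0 ≤ B) :
    0 ≤ 2*N^2 + 2*N*(1-2*c)*A + (c*(1-c))*B - (c*(1-c))*A^2 := by
  have hgB : 0 ≤ (c*(1-c))*B := mul_nonneg (mul_nonneg hc0 (by linarith)) hB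
  have hγinv : 0 < 1/γ := by positivity
  have hNneg : N < 0 := lt_of_le_of_lt hN (by linarith)
  rcases le_or_gt 0 A with h | h
  · have h1 : 0 ≤ 2*N*(N+A) := by nlinarith
    have h2 : 0 ≤ c * (A * (-(4*N) - A)) :=
      mul_nonneg hc0 (mul_nonneg h (by nlinarith))
    nlinarith [mul_nonneg (mul_nonneg hc0 h) (mul_nonneg hc0 h)]
  · have h1 : 0 ≤ 2*N*(N-A) := by nlinarith
    have hcA : A ≤ c*A := by nlinarith [mul_nonneg (sub_nonneg.2 hc1) (neg_nonneg.2 h.le)]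
    have h4 : 4*N - c*A ≤ 0 := by linarith
    have h2 : 0 ≤ (1-c) * (A * (4*N - c*A)) := by
      have := mul_nonneg (neg_nonneg.2 h.le) (neg_nonneg.2 h4)
      nlinarith
    nlinarith

lemma traffic_wpos (γ T : ℝ) (hγ : 0 < γ) (u : ℝ → ℝ → ℝ)
    (hu : ContDiffOn ℝ 1 (Function.uncurry u) (Ico 0 T ×ˢ univ))
    (hd : ContDiffOn ℝ 1 (Function.uncurry fun t x => deriv (u t) x) (Ico 0 T ×ˢ univ))
    (hPDE : ∀ t x : ℝ, t ∈ Ioo 0 T →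
      deriv (fun s => u s x) t +
        deriv (fun y => u t y * (1 - u t y) * Real.exp (-(ubar γ u t y))) x = 0)
    (hrange : ∀ t ∈ Ico (0 : ℝ) T, ∀ x : ℝ, u t x ∈ Icc (0 : ℝ) 1)
    (η : ℝ → ℝ)
    (hmin : ∀ t ∈ Ico (0 : ℝ) T, ∀ x : ℝ, deriv (u t) (η t) ≤ deriv (u t) x)
    {t : ℝ} (ht : t ∈ Ioo 0 T) (hN : deriv (u t) (η t) ≤ -(1/γ)) :
    0 ≤ deriv (fun s => deriv (u s) (η t)) t := by
  obtain ⟨ht0, htT⟩ := ht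
  have htIoo : t ∈ Ioo 0 T := ⟨ht0, htT⟩
  have htIco : t ∈ Ico 0 T := ⟨ht0.le, htT⟩
  have hcu : Continuous (u t) := traffic_slice_cont_x hu htIco
  have hcq : Continuous (deriv (u t)) := traffic_slice_cont_x hd htIco
  have hdu : ∀ x : ℝ, HasDerivAt (u t) (deriv (u t) x) x :=
    fun x => (traffic_slice_diff_x hu htIco x).hasDerivAt
  have hdq : ∀ x : ℝ, HasDerivAt (deriv (u t)) (deriv (deriv (u t)) x) x :=
    fun x => (traffic_slice_diff_x hd htIco x).hasDerivAt
  -- derivative of ubar in x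
  have hInt : ∀ a b : ℝ, IntervalIntegrable (u t) volume a b := fun a b =>
    hcu.intervalIntegrable a b
  have hprim : ∀ x : ℝ, HasDerivAt (fun y => ∫ s in (0:ℝ)..y, u t s) (u t x) x := fun x =>
    intervalIntegral.integral_hasDerivAt_right (hInt 0 x)
      (hcu.stronglyMeasurableAtFilter _ _) hcu.continuousAt
  have hubar : ∀ x : ℝ, HasDerivAt (ubar γ u t) ((u t (x + γ) - u t x) / γ) x := by
    intro x
    have h1 : ubar γ u t = fun y =>
        (1/γ) * ((∫ s in (0:ℝ)..(y + γ), u t s) - ∫ s in (0:ℝ)..y, u t s) := by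
      funext y
      unfold ubar
      congr 1
      have := intervalIntegral.integral_add_adjacent_intervals (hInt 0 y) (hInt y (y + γ))
      linarith
    have h2 : HasDerivAt (fun y : ℝ => ∫ s in (0:ℝ)..(y + γ), u t s) (u t (x + γ)) x := by
      have h3 := (hprim (x + γ)).comp x ((hasDerivAt_id x).add_const γ)
      simpa [Function.comp_def] using h3
    rw [h1]
    have h4 := (h2.sub (hprim x)).const_mul (1/γ)
    exact h4.congr_deriv (by ring)
  -- derivative of the flux in x
  have hE : ∀ x : ℝ, HasDerivAt (fun y => Real.exp (-(ubar γ u t y)))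
      (Real.exp (-(ubar γ u t x)) * (-((u t (x + γ) - u t x) / γ))) x :=
    fun x => ((hubar x).neg).exp
  have hflux : ∀ x : ℝ, HasDerivAt (fun y => u t y * (1 - u t y) * Real.exp (-(ubar γ u t y)))
      ((deriv (u t) x * (1 - u t x) + u t x * (-(deriv (u t) x))) * Real.exp (-(ubar γ u t x))
        + (u t x * (1 - u t x)) *
          (Real.exp (-(ubar γ u t x)) * (-((u t (x + γ) - u t x) / γ)))) x := by
    intro x
    exact ((hdu x).mul ((hdu x).const_sub 1)).mul (hE x)
  -- time derivatives exist
  have hvd : ∀ s ∈ Ioo (0:ℝ) T, ∀ x : ℝ,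
      HasDerivAt (fun s' => u s' x) (deriv (fun s' => u s' x) s) s := by
    intro s hs x
    exact (traffic_slice_diff_t hu x hs).hasDerivAt
  have hwd : ∀ s ∈ Ioo (0:ℝ) T, ∀ x : ℝ,
      HasDerivAt (fun s' => deriv (u s') x) (deriv (fun s' => deriv (u s') x) s) s := by
    intro s hs x
    exact (traffic_slice_diff_t hd x hs).hasDerivAt
  -- PDE rewritten
  have hveq : ∀ x : ℝ, deriv (fun s => u s x) t =
      -((deriv (u t) x * (1 - u t x) + u t x * (-(deriv (u t) x))) * Real.exp (-(ubar γ u t x))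
        + (u t x * (1 - u t x)) *
          (Real.exp (-(ubar γ u t x)) * (-((u t (x + γ) - u t x) / γ)))) := by
    intro x
    have h1 := hPDE t x htIoo
    rw [(hflux x).deriv] at h1
    linarith
  -- FTC in x
  have hftc : ∀ s ∈ Ioo (0:ℝ) T, ∀ z : ℝ,
      (∫ y in (0:ℝ)..z, deriv (u s) y) = u s z - u s 0 := by
    intro s hs z
    have hsIco : s ∈ Ico 0 T := ⟨hs.1.le, hs.2⟩
    exact intervalIntegral.integral_eq_sub_of_hasDerivAt
      (fun y _ => (traffic_slice_diff_x hu hsIco y).hasDerivAt)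
      ((traffic_slice_cont_x hd hsIco).intervalIntegrable 0 z)
  -- differentiation under the integral sign
  have key : ∀ z : ℝ, HasDerivAt (fun s => ∫ y in (0:ℝ)..z, deriv (u s) y)
      (∫ y in (0:ℝ)..z, deriv (fun s' => deriv (u s') y) t) t := by
    intro z
    obtain ⟨ε, hε0, hball⟩ : ∃ ε > 0, Metric.closedBall t ε ⊆ Ioo 0 T :=
      (Metric.nhds_basis_closedBall.mem_iff).1 (isOpen_Ioo.mem_nhds htIoo)
    have hK : IsCompact ((Metric.closedBall t ε) ×ˢ uIcc (0:ℝ) z) :=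
      (isCompact_closedBall _ _).prod isCompact_uIcc
    have hWc : ContinuousOn
        (fun p : ℝ × ℝ => fderiv ℝ (Function.uncurry fun a b => deriv (u a) b) p ((1:ℝ),(0:ℝ)))
        ((Metric.closedBall t ε) ×ˢ uIcc (0:ℝ) z) :=
      (traffic_cont_w_joint hd).mono (fun p hp => ⟨hball hp.1, mem_univ _⟩)
    obtain ⟨C, hC⟩ := hK.exists_bound_of_continuousOn hWc
    have hweq : ∀ s ∈ Ioo (0:ℝ) T, ∀ y : ℝ, deriv (fun s' => deriv (u s') y) s
        = fderiv ℝ (Function.uncurry fun a b => deriv (u a) b) (s, y) ((1:ℝ),(0:ℝ)) := by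
      intro s hs y
      exact (traffic_slice_deriv_t hd y hs).deriv
    have h1 : ∀ᶠ s in 𝓝 t, AEStronglyMeasurable (fun y => deriv (u s) y)
        (volume.restrict (Set.uIoc (0:ℝ) z)) := by
      filter_upwards [isOpen_Ioo.eventually_mem htIoo] with s hs
      exact (traffic_slice_cont_x hd ⟨hs.1.le, hs.2⟩).aestronglyMeasurable
    have h2 : IntervalIntegrable (fun y => deriv (u t) y) volume 0 z :=
      hcq.intervalIntegrable 0 z
    have h3 : AEStronglyMeasurable (fun y => deriv (fun s' => deriv (u s') y) t)
        (volume.restrict (Set.uIoc (0:ℝ) z)) := (traffic_cont_w hd htIoo).aestronglyMeasurable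
    have h4 : ∀ᵐ y ∂volume, y ∈ Set.uIoc (0:ℝ) z → ∀ s ∈ Metric.ball t ε,
        ‖deriv (fun s' => deriv (u s') y) s‖ ≤ C := by
      apply ae_of_all
      intro y hy s hs
      have hsIoo : s ∈ Ioo 0 T := hball (Metric.ball_subset_closedBall hs)
      rw [hweq s hsIoo y]
      exact hC _ ⟨Metric.ball_subset_closedBall hs, uIoc_subset_uIcc hy⟩
    have h5 : IntervalIntegrable (fun _ : ℝ => C) volume 0 z := intervalIntegrable_const
    have h6 : ∀ᵐ y ∂volume, y ∈ Set.uIoc (0:ℝ) z → ∀ s ∈ Metric.ball t ε,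
        HasDerivAt (fun s' => deriv (u s') y) (deriv (fun s' => deriv (u s') y) s) s := by
      apply ae_of_all
      intro y hy s hs
      exact hwd s (hball (Metric.ball_subset_closedBall hs)) y
    exact (intervalIntegral.hasDerivAt_integral_of_dominated_loc_of_deriv_le
      (F := fun s y => deriv (u s) y)
      (F' := fun s y => deriv (fun s' => deriv (u s') y) s)
      (bound := fun _ : ℝ => C) (Metric.ball_mem_nhds t hε0) h1 h2 h3 h4 h5 h6).2
  -- spatial derivative of the time derivative
  have hvrep : ∀ z : ℝ, deriv (fun s => u s z) t
      = deriv (fun s => u s 0) t + ∫ y in (0:ℝ)..z, deriv (fun s' => deriv (u s') y) t := by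
    intro z
    have h1 : HasDerivAt (fun s => u s z - u s 0)
        (deriv (fun s => u s z) t - deriv (fun s => u s 0) t) t :=
      (hvd t htIoo z).sub (hvd t htIoo 0)
    have h2 : HasDerivAt (fun s => u s z - u s 0)
        (∫ y in (0:ℝ)..z, deriv (fun s' => deriv (u s') y) t) t := by
      refine HasDerivAt.congr_of_eventuallyEq (key z) ?_
      filter_upwards [isOpen_Ioo.mem_nhds htIoo] with s hs
      exact (hftc s hs z).symm
    have h3 := h1.unique h2
    linarith
  have hvderiv : ∀ z : ℝ, HasDerivAt (fun z' => deriv (fun s => u s z') t)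
      (deriv (fun s' => deriv (u s') z) t) z := by
    intro z
    have hwc : Continuous (fun y => deriv (fun s' => deriv (u s') y) t) :=
      traffic_cont_w hd htIoo
    have h1 : HasDerivAt (fun z' => deriv (fun s => u s 0) t
        + ∫ y in (0:ℝ)..z', deriv (fun s' => deriv (u s') y) t)
        (deriv (fun s' => deriv (u s') z) t) z :=
      (intervalIntegral.integral_hasDerivAt_right (hwc.intervalIntegrable 0 z)
        (hwc.stronglyMeasurableAtFilter _ _) hwc.continuousAt).const_add _
    have h2 : (fun z' => deriv (fun s => u s z') t) = fun z' => deriv (fun s => u s 0) t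
        + ∫ y in (0:ℝ)..z', deriv (fun s' => deriv (u s') y) t := funext hvrep
    rw [h2]
    exact h1
  -- now work at the minimum point
  set x₀ := η t with hx0
  have hqx0 : deriv (deriv (u t)) x₀ = 0 := by
    have hloc : IsLocalMin (deriv (u t)) x₀ := Filter.Eventually.of_forall (hmin t htIco)
    exact hloc.deriv_eq_zero
  have hshift : HasDerivAt (fun y => u t (y + γ)) (deriv (u t) (x₀ + γ)) x₀ := by
    have h1 := (hdu (x₀ + γ)).comp x₀ ((hasDerivAt_id x₀).add_const γ)
    simpa [Function.comp_def] using h1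
  have hA : HasDerivAt (fun y => (u t (y + γ) - u t y) / γ)
      ((deriv (u t) (x₀ + γ) - deriv (u t) x₀) / γ) x₀ := (hshift.sub (hdu x₀)).div_const γ
  obtain ⟨D, hGd, hDval⟩ : ∃ D : ℝ, HasDerivAt (fun y =>
      (deriv (u t) y * (1 - u t y) + u t y * (-(deriv (u t) y))) * Real.exp (-(ubar γ u t y))
        + (u t y * (1 - u t y)) *
          (Real.exp (-(ubar γ u t y)) * (-((u t (y + γ) - u t y) / γ)))) D x₀ ∧
      -D = Real.exp (-(ubar γ u t x₀)) *
        (2*(deriv (u t) x₀)^2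
          + 2*(deriv (u t) x₀)*(1-2*(u t x₀))*((u t (x₀ + γ) - u t x₀) / γ)
          + ((u t x₀)*(1-(u t x₀)))*((deriv (u t) (x₀ + γ) - deriv (u t) x₀) / γ)
          - ((u t x₀)*(1-(u t x₀)))*((u t (x₀ + γ) - u t x₀) / γ)^2) := by
    refine ⟨_, ((((hdq x₀).mul ((hdu x₀).const_sub 1)).add
      ((hdu x₀).mul (hdq x₀).neg)).mul (hE x₀)).add
      (((hdu x₀).mul ((hdu x₀).const_sub 1)).mul ((hE x₀).mul hA.neg)), ?_⟩
    rw [hqx0]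
    simp only [Pi.mul_apply, Pi.sub_apply, Pi.neg_apply, Pi.add_apply]
    ring
  have hwG : HasDerivAt (fun y =>
      -((deriv (u t) y * (1 - u t y) + u t y * (-(deriv (u t) y))) * Real.exp (-(ubar γ u t y))
        + (u t y * (1 - u t y)) *
          (Real.exp (-(ubar γ u t y)) * (-((u t (y + γ) - u t y) / γ)))))
      (deriv (fun s' => deriv (u s') x₀) t) x₀ := by
    refine HasDerivAt.congr_of_eventuallyEq (hvderiv x₀) ?_
    exact Filter.Eventually.of_forall fun y => (hveq y).symm
  have hwval : deriv (fun s' => deriv (u s') x₀) t = -D := hwG.unique hGd.neg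
  rw [hwval, hDval]
  apply mul_nonneg (Real.exp_pos _).le
  have hu1 := hrange t htIco x₀
  have hu2 := hrange t htIco (x₀ + γ)
  have hA2 : (u t (x₀ + γ) - u t x₀) / γ ≤ 1/γ := by
    rw [div_le_div_iff₀ hγ hγ]
    nlinarith [hu2.2, hu1.1]
  have hA1 : -(1/γ) ≤ (u t (x₀ + γ) - u t x₀) / γ := by
    rw [show -(1/γ) = (-1)/γ by ring, div_le_div_iff₀ hγ hγ]
    nlinarith [hu2.1, hu1.2]
  have hB : 0 ≤ (deriv (u t) (x₀ + γ) - deriv (u t) x₀) / γ :=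
    div_nonneg (sub_nonneg.2 (hmin t htIco (x₀ + γ))) hγ.le
  exact traffic_key_algebra hγ hN hA1 hA2 hu1.1 hu1.2 hB


/-- for a `C¹` solution `u` of the traffic model with constant potential on
`[0,T)×ℝ`, with `∂ₓu` of class `C¹`, `0 ≤ u ≤ 1`, whose gradient infimum
`N(t) = inf_x ∂ₓu(t,x)` is attained at `η(t)` and is locally Lipschitz in `t`, one has
`N(t) ≥ min{N(0), −1/γ}` for all `t ∈ [0,T)`. -/
theorem gradient_infimum_lower_bound
    (γ T : ℝ) (hγ : 0 < γ) (hT : 0 < T) (u : ℝ → ℝ → ℝ)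
    (hu : ContDiffOn ℝ 1 (Function.uncurry u) (Ico 0 T ×ˢ univ))
    (hd : ContDiffOn ℝ 1 (Function.uncurry fun t x => deriv (u t) x) (Ico 0 T ×ˢ univ))
    (hPDE : ∀ t x : ℝ, t ∈ Ioo 0 T →
      deriv (fun s => u s x) t +
        deriv (fun y => u t y * (1 - u t y) * Real.exp (-(ubar γ u t y))) x = 0)
    (hrange : ∀ t ∈ Ico (0 : ℝ) T, ∀ x : ℝ, u t x ∈ Icc (0 : ℝ) 1)
    (η : ℝ → ℝ)
    (hmin : ∀ t ∈ Ico (0 : ℝ) T, ∀ x : ℝ, deriv (u t) (η t) ≤ deriv (u t) x)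
    (hLip : ∀ T' ∈ Ioo (0 : ℝ) T, ∃ L : NNReal,
      LipschitzOnWith L (fun t => deriv (u t) (η t)) (Icc 0 T')) :
    ∀ t ∈ Ico (0 : ℝ) T,
      min (deriv (u 0) (η 0)) (-(1/γ)) ≤ deriv (u t) (η t) := by

  intro t ht
  by_contra hcon
  push_neg at hcon
  have hγinv : (0:ℝ) < 1/γ := by positivity
  have ht0 : 0 < t := by
    rcases ht.1.lt_or_eq with h | h
    · exact h
    · exfalso
      rw [← h] at hcon
      exact absurd (min_le_left (deriv (u 0) (η 0)) (-(1/γ))) (not_le.2 hcon)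
  have htT : t < T := ht.2
  -- Lipschitz continuity of N on [0, T']
  have hT'mem : (t + T)/2 ∈ Ioo 0 T := ⟨by positivity, by linarith⟩
  have htT' : t < (t + T)/2 := by linarith
  obtain ⟨L, hL⟩ := hLip ((t + T)/2) hT'mem
  have hNc : ContinuousOn (fun s => deriv (u s) (η s)) (Icc 0 ((t + T)/2)) := hL.continuousOn
  -- the last time before t at which N ≥ c
  set c := min (deriv (u 0) (η 0)) (-(1/γ)) with hc
  set S := Icc 0 t ∩ (fun s => deriv (u s) (η s)) ⁻¹' (Ici c) with hS
  have hSclosed : IsClosed S := by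
    apply ContinuousOn.preimage_isClosed_of_isClosed
      (hNc.mono (Icc_subset_Icc le_rfl htT'.le)) isClosed_Icc isClosed_Ici
  have hS0 : (0:ℝ) ∈ S := by
    refine ⟨⟨le_rfl, ht0.le⟩, ?_⟩
    simp only [mem_preimage, mem_Ici, hc]
    exact min_le_left _ _
  have hSbdd : BddAbove S := BddAbove.mono inter_subset_left bddAbove_Icc
  set a := sSup S with ha
  have haS : a ∈ S := hSclosed.csSup_mem ⟨0, hS0⟩ hSbdd
  have ha0 : 0 ≤ a := haS.1.1
  have hat : a ≤ t := haS.1.2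
  have haN : c ≤ deriv (u a) (η a) := haS.2
  have hat' : a < t := by
    rcases hat.lt_or_eq with h | h
    · exact h
    · exfalso
      rw [h] at haN
      exact absurd haN (not_le.2 hcon)
  -- N < c strictly after a
  have hlt : ∀ r ∈ Ioc a t, deriv (u r) (η r) < c := by
    intro r hr
    by_contra hge
    push_neg at hge
    have hrS : r ∈ S := ⟨⟨ha0.trans hr.1.le, hr.2⟩, hge⟩
    exact absurd (le_csSup hSbdd hrS) (not_le.2 hr.1)
  -- Gronwall-type estimate on the time-reversed function
  have hgron := le_gronwallBound_of_liminf_deriv_right_le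
    (f := fun x => deriv (u (t - x)) (η (t - x))) (f' := fun _ => (0:ℝ))
    (δ := deriv (u t) (η t)) (K := 0) (ε := 0) (a := 0) (b := t - a)
    ?_ ?_ (by norm_num) (fun x _ => by simp)
  · have hfin := hgron (t - a) ⟨by linarith, le_rfl⟩
    simp only [gronwallBound] at hfin
    norm_num at hfin
    linarith
  -- continuity
  · refine hNc.comp ((continuous_const.sub continuous_id).continuousOn) ?_
    intro x hx
    simp only [mem_Icc] at hx ⊢
    constructor <;> [linarith; linarith]
  -- slope estimate
  · intro x hx r hr
    have hxt : x < t := lt_of_lt_of_le hx.2 (by linarith)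
    have hr₀mem : t - x ∈ Ioc a t := ⟨by linarith [hx.2], by linarith [hx.1]⟩
    have hr₀Ioo : t - x ∈ Ioo 0 T := ⟨lt_of_le_of_lt ha0 hr₀mem.1, by linarith [hx.1]⟩
    have hNr₀ : deriv (u (t - x)) (η (t - x)) ≤ -(1/γ) :=
      le_trans (hlt (t - x) hr₀mem).le (min_le_right _ _)
    have hw0 : 0 ≤ deriv (fun s => deriv (u s) (η (t - x))) (t - x) :=
      traffic_wpos γ T hγ u hu hd hPDE hrange η hmin hr₀Ioo hNr₀
    have hder : HasDerivAt (fun s => deriv (u s) (η (t - x)))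
        (deriv (fun s => deriv (u s) (η (t - x))) (t - x)) (t - x) :=
      (traffic_slice_diff_t hd (η (t - x)) hr₀Ioo).hasDerivAt
    have hsl : Tendsto (slope (fun s => deriv (u s) (η (t - x))) (t - x)) (𝓝[≠] (t - x))
        (𝓝 (deriv (fun s => deriv (u s) (η (t - x))) (t - x))) :=
      hasDerivAt_iff_tendsto_slope.1 hder
    have hmap : Tendsto (fun z : ℝ => t - z) (𝓝[>] x) (𝓝[≠] (t - x)) := by
      rw [tendsto_nhdsWithin_iff]
      constructor
      · exact ((continuous_const.sub continuous_id).tendsto x).mono_left nhdsWithin_le_nhds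
      · filter_upwards [self_mem_nhdsWithin] with z hz
        simp only [mem_compl_iff, mem_singleton_iff]
        intro hzz
        have : z = x := by linarith
        rw [this] at hz
        exact lt_irrefl x hz
    have hcomp : Tendsto (fun z => slope (fun s => deriv (u s) (η (t - x))) (t - x) (t - z))
        (𝓝[>] x) (𝓝 (deriv (fun s => deriv (u s) (η (t - x))) (t - x))) := hsl.comp hmap
    have hev1 : ∀ᶠ z in 𝓝[>] x,
        -(slope (fun s => deriv (u s) (η (t - x))) (t - x) (t - z)) < r :=
      hcomp.neg.eventually_lt_const (by linarith)
    have hev2 : ∀ᶠ z in 𝓝[>] x, z < t :=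
      ((isOpen_Iio.eventually_mem (show x ∈ Iio t from hxt)).filter_mono nhdsWithin_le_nhds)
    apply Filter.Eventually.frequently
    filter_upwards [hev1, hev2, self_mem_nhdsWithin] with z h1 h2 h3
    have hzx : 0 < z - x := sub_pos.2 h3
    have hx0' : 0 ≤ x := hx.1
    have htz : t - z ∈ Ico 0 T := ⟨by linarith, by linarith⟩
    have hle : deriv (u (t - z)) (η (t - z)) ≤ deriv (u (t - z)) (η (t - x)) :=
      hmin (t - z) htz (η (t - x))
    show (z - x)⁻¹ * (deriv (u (t - z)) (η (t - z)) - deriv (u (t - x)) (η (t - x))) < r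
    have hslope_eq : -(slope (fun s => deriv (u s) (η (t - x))) (t - x) (t - z))
        = (z - x)⁻¹ * (deriv (u (t - z)) (η (t - x)) - deriv (u (t - x)) (η (t - x))) := by
      rw [slope_def_field, show t - z - (t - x) = -(z - x) by ring, div_neg, neg_neg,
        div_eq_inv_mul]
    have hstep : (z - x)⁻¹ * (deriv (u (t - z)) (η (t - z)) - deriv (u (t - x)) (η (t - x)))
        ≤ (z - x)⁻¹ * (deriv (u (t - z)) (η (t - x)) - deriv (u (t - x)) (η (t - x))) := by
      apply mul_le_mul_of_nonneg_left _ (inv_nonneg.2 hzx.le)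
      linarith
    calc (z - x)⁻¹ * (deriv (u (t - z)) (η (t - z)) - deriv (u (t - x)) (η (t - x)))
        ≤ (z - x)⁻¹ * (deriv (u (t - z)) (η (t - x)) - deriv (u (t - x)) (η (t - x))) := hstep
      _ = -(slope (fun s => deriv (u s) (η (t - x))) (t - x) (t - z)) := hslope_eq.symm
      _ < r := h1
end

section
/- Let γ > 0 and let u : [0,T)×ℝ → ℝ be a C¹ solution of the traffic flow model ∂_t u + ∂_x (u(1−u) e^{−ū}) = 0, where ū(t,x) = (1/γ)∫_x^{x+γ} u(t,y) dy, with u bounded and ∂_x u bounded on [0,T')×ℝ for every T' < T, and with initial data satisfying 0 ≤ u(0,x) ≤ 1 for all x ∈ ℝ. Then 0 ≤ u(t,x) ≤ 1 for all (t,x) ∈ [0,T)×ℝ. -/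
open Set

/-- The characteristic speed. -/
noncomputable def charV (γ : ℝ) (u : ℝ → ℝ → ℝ) (s y : ℝ) : ℝ :=
  (1 - 2 * u s y) * Real.exp (-(ubar γ u s y))

lemma hasDerivAt_slide {γ : ℝ} {f : ℝ → ℝ} (hf : Continuous f) (x : ℝ) :
    HasDerivAt (fun z => (1/γ) * ∫ y in z..(z + γ), f y)
      (1/γ * (f (x + γ) - f x)) x := by
  have h1 : ∀ z : ℝ, ∫ y in z..(z + γ), f y =
      (∫ y in (0:ℝ)..(z + γ), f y) - ∫ y in (0:ℝ)..z, f y := by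
    intro z
    rw [eq_sub_iff_add_eq, add_comm]
    exact intervalIntegral.integral_add_adjacent_intervals
      (hf.intervalIntegrable _ _) (hf.intervalIntegrable _ _)
  have hg : ∀ z : ℝ, HasDerivAt (fun w => ∫ y in (0:ℝ)..w, f y) (f z) z := fun z =>
    (hf.integral_hasStrictDerivAt 0 z).hasDerivAt
  have h2 : HasDerivAt (fun z => (∫ y in (0:ℝ)..(z + γ), f y) - ∫ y in (0:ℝ)..z, f y)
      (f (x + γ) * 1 - f x) x := by
    have := (((hg (x + γ)).comp x ((hasDerivAt_id x).add_const γ))).sub (hg x)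
    exact this
  have h3 := h2.const_mul (1/γ)
  have hfun : (fun z => (1/γ) * ∫ y in z..(z + γ), f y)
      = fun z => (1/γ) * ((∫ y in (0:ℝ)..(z + γ), f y) - ∫ y in (0:ℝ)..z, f y) := by
    funext z; rw [h1 z]
  rw [hfun]
  exact h3.congr_deriv (by ring)

lemma gronwall_one_sided {w w' : ℝ → ℝ} {a b δ K : ℝ} (hab : a ≤ b) (hK : 0 ≤ K)
    (hw : ContinuousOn w (Icc a b))
    (hw' : ∀ s ∈ Ico a b, HasDerivWithinAt w (w' s) (Ici s) s)
    (hbound : ∀ s ∈ Ico a b, |w' s| ≤ K * |w s|)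
    (ha : w a ≤ δ) (hδ : 0 ≤ δ) : w b ≤ δ * Real.exp (K * (b - a)) := by
  by_cases hwb : w b ≤ 0
  · exact hwb.trans (by positivity)
  push_neg at hwb
  have hbnd : ∀ s ∈ Ico a b, ‖w' s‖ ≤ K * ‖w s‖ + 0 := by
    intro s hs
    simpa [Real.norm_eq_abs] using hbound s hs
  by_cases hS : ({s ∈ Icc a b | w s ≤ 0}).Nonempty
  · exfalso
    set S := {s ∈ Icc a b | w s ≤ 0} with hSdef
    have hScl : IsClosed S := hw.preimage_isClosed_of_isClosed isClosed_Icc isClosed_Iic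
    have hSbdd : BddAbove S := ⟨b, fun s hs => hs.1.2⟩
    set s₂ := sSup S with hs₂def
    have hs₂S : s₂ ∈ S := hScl.csSup_mem hS hSbdd
    have hs₂I : s₂ ∈ Icc a b := hs₂S.1
    have hw₂ : w s₂ ≤ 0 := hs₂S.2
    have hs₂b : s₂ ≠ b := fun h => absurd hw₂ (by rw [h]; exact not_le.mpr hwb)
    have hs₂lt : s₂ < b := lt_of_le_of_ne hs₂I.2 hs₂b
    have hgt : ∀ r ∈ Ioc s₂ b, 0 < w r := by
      intro r hr
      by_contra h
      push_neg at h
      have : r ∈ S := ⟨⟨hs₂I.1.trans hr.1.le, hr.2⟩, h⟩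
      exact absurd (le_csSup hSbdd this) (not_le.mpr hr.1)
    have hw₂0 : w s₂ = 0 := by
      refine le_antisymm hw₂ ?_
      have hcw : ContinuousWithinAt w (Ioc s₂ b) s₂ :=
        (hw s₂ hs₂I).mono (Ioc_subset_Icc_self.trans (Icc_subset_Icc hs₂I.1 le_rfl))
      haveI := left_nhdsWithin_Ioc_neBot hs₂lt
      refine ge_of_tendsto hcw ?_
      exact eventually_nhdsWithin_of_forall (fun r hr => (hgt r hr).le)
    have h := norm_le_gronwallBound_of_norm_deriv_right_le
      (hw.mono (Icc_subset_Icc hs₂I.1 le_rfl))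
      (fun s hs => hw' s ⟨hs₂I.1.trans hs.1, hs.2⟩)
      (δ := 0) (by simp [hw₂0])
      (fun s hs => hbnd s ⟨hs₂I.1.trans hs.1, hs.2⟩) b ⟨hs₂lt.le, le_rfl⟩
    rw [gronwallBound_ε0_δ0] at h
    have : w b ≤ 0 := le_trans (le_abs_self _) (by simpa [Real.norm_eq_abs] using h)
    exact absurd this (not_le.mpr hwb)
  · have hpos : ∀ s ∈ Icc a b, 0 < w s := by
      intro s hs
      by_contra h
      exact hS ⟨s, hs, not_lt.mp h⟩
    have hwa : ‖w a‖ ≤ δ := by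
      rw [Real.norm_eq_abs, abs_of_pos (hpos a ⟨le_rfl, hab⟩)]
      exact ha
    have h := norm_le_gronwallBound_of_norm_deriv_right_le hw hw' hwa hbnd b ⟨hab, le_rfl⟩
    rw [gronwallBound_ε0] at h
    exact le_trans (le_abs_self _) (by simpa [Real.norm_eq_abs] using h)

lemma le_zero_of_forall_le_mul {a c t : ℝ} (ht : 0 < t) (hc : 0 ≤ c)
    (h : ∀ ε : ℝ, 0 < ε → ε ≤ t → a ≤ c * ε) : a ≤ 0 := by
  by_contra h'
  push_neg at h'
  set ε := min t (a / (2 * (c + 1))) with hε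
  have hε0 : 0 < ε := lt_min ht (by positivity)
  have h1 := h ε hε0 (min_le_left _ _)
  have h2 : ε ≤ a / (2 * (c + 1)) := min_le_right _ _
  have h3 : a / (2 * (c + 1)) * (2 * (c + 1)) = a := div_mul_cancel₀ a (by positivity)
  nlinarith [mul_le_mul_of_nonneg_left h2 hc]

set_option maxHeartbeats 1000000 in
/-- for a `C¹` solution `u` of the traffic model with constant potential on
`[0,T)×ℝ`, with `u` and `∂ₓu` bounded on `[0,T')×ℝ` for every `T' < T`, if
`0 ≤ u(0,·) ≤ 1` then `0 ≤ u(t,x) ≤ 1` for all `(t,x) ∈ [0,T)×ℝ`. -/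
theorem invariant_region_traffic
    (γ T : ℝ) (hγ : 0 < γ) (hT : 0 < T) (u : ℝ → ℝ → ℝ)
    (hu : ContDiffOn ℝ 1 (Function.uncurry u) (Ico 0 T ×ˢ univ))
    (hPDE : ∀ t x : ℝ, t ∈ Ioo 0 T →
      deriv (fun s => u s x) t +
        deriv (fun y => u t y * (1 - u t y) * Real.exp (-(ubar γ u t y))) x = 0)
    (hbdd : ∀ T' : ℝ, T' < T → ∃ C : ℝ,
      ∀ t ∈ Ico (0 : ℝ) T', ∀ x : ℝ, |u t x| ≤ C ∧ |deriv (u t) x| ≤ C)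
    (hinit : ∀ x : ℝ, u 0 x ∈ Icc (0 : ℝ) 1) :
    ∀ t ∈ Ico (0 : ℝ) T, ∀ x : ℝ, u t x ∈ Icc (0 : ℝ) 1 := by
  intro t ht x
  rcases eq_or_lt_of_le ht.1 with h0 | ht0
  · exact h0 ▸ hinit x
  have htT : t < T := ht.2
  obtain ⟨C₀, hC₀⟩ := hbdd ((t + T)/2) (by linarith)
  set T' : ℝ := (t + T)/2 with hT'def
  have htT' : t < T' := by rw [hT'def]; linarith
  have hT'T : T' < T := by rw [hT'def]; linarith
  set C : ℝ := max C₀ 0 with hCdef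
  have hC0 : 0 ≤ C := le_max_right _ _
  have hCu : ∀ s ∈ Ico (0:ℝ) T', ∀ y : ℝ, |u s y| ≤ C :=
    fun s hs y => ((hC₀ s hs y).1).trans (le_max_left _ _)
  have hCd : ∀ s ∈ Ico (0:ℝ) T', ∀ y : ℝ, |deriv (u s) y| ≤ C :=
    fun s hs y => ((hC₀ s hs y).2).trans (le_max_left _ _)
  have hE1 : (0:ℝ) < Real.exp C := Real.exp_pos C
  have h2Cγ : (0:ℝ) ≤ 2*C/γ := div_nonneg (by linarith) hγ.le
  have hG0 : (0:ℝ) ≤ Real.exp C * (2*C/γ) := mul_nonneg hE1.le h2Cγ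
  have hK0 : (0:ℝ) ≤ (1+C) * (Real.exp C * (2*C/γ)) := mul_nonneg (by linarith) hG0
  have hM0 : (0:ℝ) ≤ Real.exp C * ((1 + 2*C)*C + C*(1+C)*(2*C/γ)) :=
    mul_nonneg hE1.le (add_nonneg (mul_nonneg (by linarith) hC0)
      (mul_nonneg (mul_nonneg hC0 (by linarith)) h2Cγ))
  have hA0 : (0:ℝ) ≤ (1 + 2*C) * Real.exp C := mul_nonneg (by linarith) hE1.le
  have hLc0 : (0:ℝ) ≤ 2*C*Real.exp C + (1+2*C)*Real.exp C*(2*C/γ) :=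
    add_nonneg (mul_nonneg (by linarith) hE1.le) (mul_nonneg hA0 h2Cγ)
  -- continuity of uncurry u
  have hcont : ContinuousOn (Function.uncurry u) (Ico 0 T ×ˢ univ) := hu.continuousOn
  have hcu : ∀ s ∈ Ico (0:ℝ) T, Continuous (u s) := by
    intro s hs
    rw [← continuousOn_univ]
    exact hcont.comp (Continuous.continuousOn (continuous_const.prodMk continuous_id))
      (fun y _ => ⟨hs, trivial⟩)
  -- bound on ubar
  have hub : ∀ s ∈ Ico (0:ℝ) T', ∀ y : ℝ, |ubar γ u s y| ≤ C := by
    intro s hs y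
    have hsT : s ∈ Ico (0:ℝ) T := ⟨hs.1, hs.2.trans hT'T⟩
    have hint : ‖∫ z in y..(y + γ), u s z‖ ≤ C * |(y + γ) - y| :=
      intervalIntegral.norm_integral_le_of_norm_le_const (fun z _ => by
        rw [Real.norm_eq_abs]; exact hCu s hs z)
    rw [show (y + γ) - y = γ by ring, abs_of_pos hγ, Real.norm_eq_abs] at hint
    have h1γ : (0:ℝ) < 1/γ := by positivity
    calc |ubar γ u s y| = |1/γ| * |∫ z in y..(y + γ), u s z| := by
          rw [ubar, abs_mul]
      _ ≤ |1/γ| * (C * γ) := by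
          exact mul_le_mul_of_nonneg_left hint (abs_nonneg _)
      _ = C := by rw [abs_of_pos h1γ]; field_simp
  have hexpub : ∀ s ∈ Ico (0:ℝ) T', ∀ y : ℝ,
      Real.exp (-(ubar γ u s y)) ≤ Real.exp C := by
    intro s hs y
    apply Real.exp_le_exp.mpr
    have := abs_le.mp (hub s hs y)
    linarith [this.1]
  -- spatial differentiability of u s
  have hUdiff : ∀ s ∈ Ico (0:ℝ) T, ∀ y : ℝ, HasDerivAt (u s) (deriv (u s) y) y := by
    intro s hs y
    have hd : DifferentiableWithinAt ℝ (Function.uncurry u) (Ico 0 T ×ˢ univ) (s, y) :=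
      (hu.differentiableOn one_ne_zero) _ ⟨hs, trivial⟩
    have hι : DifferentiableWithinAt ℝ (fun z : ℝ => ((s, z) : ℝ × ℝ)) univ y :=
      (((differentiable_const s).prodMk differentiable_id) y).differentiableWithinAt
    have hcomp := hd.comp y hι (fun z _ => ⟨hs, trivial⟩)
    have hda : DifferentiableAt ℝ (u s) y := by
      rw [← differentiableWithinAt_univ]; exact hcomp
    exact hda.hasDerivAt
  -- full differentiability at interior points
  have hsubset : Ioo (0:ℝ) T ×ˢ (univ : Set ℝ) ⊆ Ico 0 T ×ˢ univ :=
    prod_mono Ioo_subset_Ico_self subset_rfl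
  have hL : ∀ (s y : ℝ), s ∈ Ioo (0:ℝ) T →
      HasFDerivAt (Function.uncurry u) (fderiv ℝ (Function.uncurry u) (s, y)) (s, y) := by
    intro s y hs
    have hmem : Ico (0:ℝ) T ×ˢ (univ : Set ℝ) ∈ nhds ((s, y) : ℝ × ℝ) :=
      Filter.mem_of_superset ((isOpen_Ioo.prod isOpen_univ).mem_nhds ⟨hs, trivial⟩) hsubset
    exact ((hu.contDiffAt hmem).differentiableAt one_ne_zero).hasFDerivAt
  have hpartt : ∀ (s y : ℝ), s ∈ Ioo (0:ℝ) T →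
      HasDerivAt (fun r => u r y) ((fderiv ℝ (Function.uncurry u) (s, y)) (1, 0)) s :=
    fun s y hs => by
      have := (hL s y hs).comp_hasDerivAt s ((hasDerivAt_id s).prodMk (hasDerivAt_const s y))
      exact this
  have hpartx : ∀ (s y : ℝ), s ∈ Ioo (0:ℝ) T →
      HasDerivAt (u s) ((fderiv ℝ (Function.uncurry u) (s, y)) (0, 1)) y :=
    fun s y hs => by
      have := (hL s y hs).comp_hasDerivAt y ((hasDerivAt_const y s).prodMk (hasDerivAt_id y))
      exact this
  -- derivative of the flux
  have hflux : ∀ (s y : ℝ), s ∈ Ioo (0:ℝ) T →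
      HasDerivAt (fun z => u s z * (1 - u s z) * Real.exp (-(ubar γ u s z)))
        (Real.exp (-(ubar γ u s y)) *
          ((1 - 2 * u s y) * deriv (u s) y
            - u s y * (1 - u s y) * (1/γ * (u s (y + γ) - u s y)))) y := by
    intro s y hs
    have hsI : s ∈ Ico (0:ℝ) T := ⟨hs.1.le, hs.2⟩
    have hU : HasDerivAt (u s) (deriv (u s) y) y := hUdiff s hsI y
    have hB : HasDerivAt (fun z => ubar γ u s z) (1/γ * (u s (y + γ) - u s y)) y := by
      simpa [ubar] using hasDerivAt_slide (hcu s hsI) y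
    have h1 : HasDerivAt (fun z => u s z * (1 - u s z))
        (deriv (u s) y * (1 - u s y) + u s y * (-(deriv (u s) y))) y :=
      hU.mul (hU.const_sub 1)
    have h2 : HasDerivAt (fun z => Real.exp (-(ubar γ u s z)))
        (Real.exp (-(ubar γ u s y)) * (-(1/γ * (u s (y + γ) - u s y)))) y := (hB.neg).exp
    have h3 := h1.mul h2
    exact h3.congr_deriv (by ring)
  -- bound on time derivative of u
  have hdtub : ∀ s ∈ Ioo (0:ℝ) T', ∀ y : ℝ,
      |deriv (fun r => u r y) s| ≤ Real.exp C * ((1 + 2*C)*C + C*(1+C)*(2*C/γ)) := by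
    intro s hs y
    have hsT : s ∈ Ioo (0:ℝ) T := ⟨hs.1, hs.2.trans hT'T⟩
    have hsI' : s ∈ Ico (0:ℝ) T' := ⟨hs.1.le, hs.2⟩
    have hfl := hflux s y hsT
    have hpd := hPDE s y hsT
    have h10 := hpartt s y hsT
    rw [h10.deriv, hfl.deriv] at hpd
    have heq : deriv (fun r => u r y) s =
        -(Real.exp (-(ubar γ u s y)) *
          ((1 - 2 * u s y) * deriv (u s) y
            - u s y * (1 - u s y) * (1/γ * (u s (y + γ) - u s y)))) := by
      rw [h10.deriv]; linarith
    rw [heq, abs_neg, abs_mul]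
    have hE : |Real.exp (-(ubar γ u s y))| ≤ Real.exp C := by
      rw [abs_of_pos (Real.exp_pos _)]; exact hexpub s hsI' y
    have hinner : |(1 - 2 * u s y) * deriv (u s) y
        - u s y * (1 - u s y) * (1/γ * (u s (y + γ) - u s y))|
        ≤ (1 + 2*C)*C + C*(1+C)*(2*C/γ) := by
      have hU := abs_le.mp (hCu s hsI' y)
      have h1 : |1 - 2 * u s y| ≤ 1 + 2*C := abs_le.mpr ⟨by linarith, by linarith⟩
      have h2 : |1 - u s y| ≤ 1 + C := abs_le.mpr ⟨by linarith, by linarith⟩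
      have hUγ := abs_le.mp (hCu s hsI' (y + γ))
      have h3 : |1/γ * (u s (y + γ) - u s y)| ≤ 2*C/γ := by
        rw [abs_mul, abs_of_pos (by positivity : (0:ℝ) < 1/γ)]
        have h4 : |u s (y + γ) - u s y| ≤ 2*C := abs_le.mpr ⟨by linarith, by linarith⟩
        calc 1/γ * |u s (y + γ) - u s y| ≤ 1/γ * (2*C) :=
              mul_le_mul_of_nonneg_left h4 (by positivity)
          _ = 2*C/γ := by ring
      calc |(1 - 2 * u s y) * deriv (u s) y
            - u s y * (1 - u s y) * (1/γ * (u s (y + γ) - u s y))|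
          ≤ |(1 - 2 * u s y) * deriv (u s) y|
            + |u s y * (1 - u s y) * (1/γ * (u s (y + γ) - u s y))| := abs_sub _ _
        _ = |1 - 2 * u s y| * |deriv (u s) y|
            + |u s y| * |1 - u s y| * |1/γ * (u s (y + γ) - u s y)| := by
            rw [abs_mul, abs_mul, abs_mul]
        _ ≤ (1 + 2*C)*C + C*(1+C)*(2*C/γ) := by
            have := hCd s hsI' y
            gcongr
            · exact abs_le.mpr ⟨by linarith, by linarith⟩
    exact mul_le_mul hE hinner (abs_nonneg _) hE1.le
  -- time Lipschitz bound for u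
  have hIsub : Icc (0:ℝ) t ⊆ Ico (0:ℝ) T' := fun s hs => ⟨hs.1, lt_of_le_of_lt hs.2 htT'⟩
  have htimeC : ∀ y : ℝ, ContinuousOn (fun s => u s y) (Icc (0:ℝ) t) := by
    intro y
    exact hcont.comp (Continuous.continuousOn (continuous_id.prodMk continuous_const))
      (fun s hs => ⟨⟨hs.1, lt_of_le_of_lt hs.2 (htT'.trans hT'T)⟩, trivial⟩)
  have hMt : ∀ y : ℝ, ∀ s ∈ Icc (0:ℝ) t, ∀ s' ∈ Icc (0:ℝ) t,
      |u s' y - u s y| ≤ (Real.exp C * ((1 + 2*C)*C + C*(1+C)*(2*C/γ))) * |s' - s| := by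
    have key : ∀ y : ℝ, ∀ s ∈ Icc (0:ℝ) t, ∀ s' ∈ Icc (0:ℝ) t, s < s' →
        |u s' y - u s y| ≤ (Real.exp C * ((1 + 2*C)*C + C*(1+C)*(2*C/γ))) * (s' - s) := by
      intro y s hs s' hs' hss'
      have hderiv : ∀ σ ∈ Ioo s s', HasDerivAt (fun r => u r y) (deriv (fun r => u r y) σ) σ := by
        intro σ hσ
        have hσT : σ ∈ Ioo (0:ℝ) T :=
          ⟨lt_of_le_of_lt hs.1 hσ.1, by have := hσ.2; have := hs'.2; linarith⟩
        exact ((hpartt σ y hσT).differentiableAt).hasDerivAt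
      obtain ⟨c, hc, hceq⟩ := exists_hasDerivAt_eq_slope (fun r => u r y) _ hss'
        ((htimeC y).mono (Icc_subset_Icc hs.1 hs'.2)) hderiv
      have hcb : |deriv (fun r => u r y) c| ≤ Real.exp C * ((1 + 2*C)*C + C*(1+C)*(2*C/γ)) :=
        hdtub c ⟨lt_of_le_of_lt hs.1 hc.1, lt_of_lt_of_le hc.2 (le_of_lt (lt_of_le_of_lt hs'.2 htT'))⟩ y
      have heq : u s' y - u s y = deriv (fun r => u r y) c * (s' - s) := by
        rw [hceq, div_mul_cancel₀ _ (sub_ne_zero.mpr hss'.ne')]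
      rw [heq, abs_mul, abs_of_pos (by linarith : (0:ℝ) < s' - s)]
      exact mul_le_mul_of_nonneg_right hcb (by linarith)
    intro y s hs s' hs'
    rcases lt_trichotomy s s' with h | h | h
    · rw [abs_of_pos (by linarith : (0:ℝ) < s' - s)]
      exact key y s hs s' hs' h
    · simp [h, hM0]
    · rw [abs_sub_comm (u s' y) (u s y), abs_sub_comm s' s,
        abs_of_pos (by linarith : (0:ℝ) < s - s')]
      exact key y s' hs' s hs h
  -- continuity of ubar in time
  have hubarC : ∀ y : ℝ, ContinuousOn (fun s => ubar γ u s y) (Icc (0:ℝ) t) := by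
    intro y
    have hlip : LipschitzOnWith
        (Real.toNNReal (Real.exp C * ((1 + 2*C)*C + C*(1+C)*(2*C/γ))))
        (fun s => ubar γ u s y) (Icc (0:ℝ) t) := by
      apply LipschitzOnWith.of_dist_le_mul
      intro s hs s' hs'
      rw [Real.dist_eq, Real.dist_eq]
      have hc1 : Continuous (u s) := hcu s ⟨(hIsub hs).1, (hIsub hs).2.trans hT'T⟩
      have hc2 : Continuous (u s') := hcu s' ⟨(hIsub hs').1, (hIsub hs').2.trans hT'T⟩
      have hint : ‖∫ z in y..(y + γ), (u s z - u s' z)‖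
          ≤ (Real.exp C * ((1 + 2*C)*C + C*(1+C)*(2*C/γ))) * |s - s'| * |(y + γ) - y| := by
        apply intervalIntegral.norm_integral_le_of_norm_le_const
        intro z _
        rw [Real.norm_eq_abs, abs_sub_comm]
        have := hMt z s hs s' hs'
        rwa [abs_sub_comm s' s] at this
      rw [show (y + γ) - y = γ by ring, abs_of_pos hγ] at hint
      have hsplit : ubar γ u s y - ubar γ u s' y
          = (1/γ) * ∫ z in y..(y + γ), (u s z - u s' z) := by
        rw [ubar, ubar, ← mul_sub,
          intervalIntegral.integral_sub (hc1.intervalIntegrable _ _) (hc2.intervalIntegrable _ _)]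
      rw [hsplit, abs_mul, abs_of_pos (by positivity : (0:ℝ) < 1/γ),
        Real.coe_toNNReal _ hM0]
      rw [Real.norm_eq_abs] at hint
      calc 1/γ * |∫ z in y..(y + γ), (u s z - u s' z)|
          ≤ 1/γ * ((Real.exp C * ((1 + 2*C)*C + C*(1+C)*(2*C/γ))) * |s - s'| * γ) :=
            mul_le_mul_of_nonneg_left hint (by positivity)
        _ = (Real.exp C * ((1 + 2*C)*C + C*(1+C)*(2*C/γ))) * |s - s'| := by
            field_simp
    exact hlip.continuousOn
  -- derivative of charV in y, with bounds
  have hvd : ∀ s ∈ Icc (0:ℝ) t, ∀ y : ℝ, HasDerivAt (charV γ u s)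
      ((-(2 * deriv (u s) y)) * Real.exp (-(ubar γ u s y)) +
        (1 - 2 * u s y) * (Real.exp (-(ubar γ u s y)) * (-(1/γ * (u s (y + γ) - u s y))))) y := by
    intro s hs y
    have hsI : s ∈ Ico (0:ℝ) T := ⟨hs.1, (lt_of_le_of_lt hs.2 htT').trans hT'T⟩
    have hU := hUdiff s hsI y
    have hB : HasDerivAt (fun z => ubar γ u s z) (1/γ * (u s (y + γ) - u s y)) y := by
      simpa [ubar] using hasDerivAt_slide (hcu s hsI) y
    exact ((hU.const_mul 2).const_sub 1).mul (hB.neg.exp)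
  have hvlip : ∀ s ∈ Icc (0:ℝ) t,
      LipschitzWith (Real.toNNReal (2*C*Real.exp C + (1+2*C)*Real.exp C*(2*C/γ)))
        (charV γ u s) := by
    intro s hs
    apply lipschitzWith_of_nnnorm_deriv_le (fun y => (hvd s hs y).differentiableAt)
    intro y
    rw [← NNReal.coe_le_coe, coe_nnnorm, Real.norm_eq_abs, Real.coe_toNNReal _ hLc0,
      (hvd s hs y).deriv]
    have hsI' : s ∈ Ico (0:ℝ) T' := hIsub hs
    have hU := abs_le.mp (hCu s hsI' y)
    have hUγ := abs_le.mp (hCu s hsI' (y + γ))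
    have hD := hCd s hsI' y
    have hE : |Real.exp (-(ubar γ u s y))| ≤ Real.exp C := by
      rw [abs_of_pos (Real.exp_pos _)]; exact hexpub s hsI' y
    have h1 : |1 - 2 * u s y| ≤ 1 + 2*C := abs_le.mpr ⟨by linarith, by linarith⟩
    have h3 : |1/γ * (u s (y + γ) - u s y)| ≤ 2*C/γ := by
      rw [abs_mul, abs_of_pos (by positivity : (0:ℝ) < 1/γ)]
      have h4 : |u s (y + γ) - u s y| ≤ 2*C := abs_le.mpr ⟨by linarith, by linarith⟩
      calc 1/γ * |u s (y + γ) - u s y| ≤ 1/γ * (2*C) :=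
            mul_le_mul_of_nonneg_left h4 (by positivity)
        _ = 2*C/γ := by ring
    calc |(-(2 * deriv (u s) y)) * Real.exp (-(ubar γ u s y)) +
          (1 - 2 * u s y) * (Real.exp (-(ubar γ u s y)) * (-(1/γ * (u s (y + γ) - u s y))))|
        ≤ |(-(2 * deriv (u s) y)) * Real.exp (-(ubar γ u s y))|
          + |(1 - 2 * u s y) * (Real.exp (-(ubar γ u s y)) * (-(1/γ * (u s (y + γ) - u s y))))| :=
          abs_add_le _ _
      _ = |2| * |deriv (u s) y| * |Real.exp (-(ubar γ u s y))|
          + |1 - 2 * u s y| * (|Real.exp (-(ubar γ u s y))| * |1/γ * (u s (y + γ) - u s y)|) := by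
          simp only [abs_mul, abs_neg]
      _ = 2 * |deriv (u s) y| * |Real.exp (-(ubar γ u s y))|
          + |1 - 2 * u s y| * (|Real.exp (-(ubar γ u s y))| * |1/γ * (u s (y + γ) - u s y)|) := by
          rw [abs_two]
      _ ≤ 2*C*Real.exp C + (1+2*C)*(Real.exp C*(2*C/γ)) := by
          gcongr 2 * ?_ * ?_ + ?_ * (?_ * ?_) <;>
            first | exact hD | exact hE | exact h1 | exact h3
      _ = 2*C*Real.exp C + (1+2*C)*Real.exp C*(2*C/γ) := by ring
  have hvnorm : ∀ s ∈ Icc (0:ℝ) t, ∀ y : ℝ, |charV γ u s y| ≤ (1 + 2*C) * Real.exp C := by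
    intro s hs y
    have hsI' : s ∈ Ico (0:ℝ) T' := hIsub hs
    have hU := abs_le.mp (hCu s hsI' y)
    have h1 : |1 - 2 * u s y| ≤ 1 + 2*C := abs_le.mpr ⟨by linarith, by linarith⟩
    rw [charV, abs_mul, abs_of_pos (Real.exp_pos _)]
    exact mul_le_mul h1 (hexpub s hsI' y) (Real.exp_pos _).le (by linarith)
  have hvcont : ∀ y : ℝ, ContinuousOn (fun s => charV γ u s y) (Icc (0:ℝ) t) := by
    intro y
    have h1 : ContinuousOn (fun s => 1 - 2 * u s y) (Icc (0:ℝ) t) :=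
      continuousOn_const.sub (continuousOn_const.mul (htimeC y))
    have h2 : ContinuousOn (fun s => Real.exp (-(ubar γ u s y))) (Icc (0:ℝ) t) :=
      Real.continuous_exp.comp_continuousOn ((hubarC y).neg)
    exact h1.mul h2
  -- Picard–Lindelöf: backward characteristic through (t, x)
  have hR0 : (0:ℝ) ≤ (1 + 2*C) * Real.exp C * t + 1 := by
    have := mul_nonneg hA0 ht0.le; linarith
  have hPL : IsPicardLindelof (charV γ u) (tmin := 0) (tmax := t) ⟨t, ht0.le, le_rfl⟩ x
      (Real.toNNReal ((1 + 2*C) * Real.exp C * t + 1)) 0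
      (Real.toNNReal ((1 + 2*C) * Real.exp C))
      (Real.toNNReal (2*C*Real.exp C + (1+2*C)*Real.exp C*(2*C/γ))) :=
    { lipschitzOnWith := fun s hs => (hvlip s hs).lipschitzOnWith
      continuousOn := fun y _ => hvcont y
      norm_le := fun s hs y _ => by
        rw [Real.norm_eq_abs, Real.coe_toNNReal _ hA0]; exact hvnorm s hs y
      mul_max_le := by
        rw [Real.coe_toNNReal _ hA0, Real.coe_toNNReal _ hR0, NNReal.coe_zero, sub_zero]
        simp only [sub_self, sub_zero]
        rw [max_eq_right ht0.le]
        linarith }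
  obtain ⟨α, hα0', hαd⟩ := hPL.exists_eq_forall_mem_Icc_hasDerivWithinAt₀
  have hα0 : α t = x := hα0'
  have hαC : ContinuousOn α (Icc (0:ℝ) t) := fun s hs => (hαd s hs).continuousWithinAt
  have hφC : ContinuousOn (fun s => u s (α s)) (Icc (0:ℝ) t) :=
    hcont.comp (continuousOn_id.prodMk hαC)
      (fun s hs => ⟨⟨hs.1, lt_of_le_of_lt hs.2 (htT'.trans hT'T)⟩, trivial⟩)
  -- the ODE satisfied along the characteristic
  have hφd : ∀ s ∈ Ioo (0:ℝ) t, HasDerivWithinAt (fun r => u r (α r))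
      (u s (α s) * (1 - u s (α s)) *
        (Real.exp (-(ubar γ u s (α s))) * (1/γ * (u s (α s + γ) - u s (α s))))) (Ici s) s := by
    intro s hs
    have hsT : s ∈ Ioo (0:ℝ) T := ⟨hs.1, by have := hs.2; linarith⟩
    have hsIcc : s ∈ Icc (0:ℝ) t := ⟨hs.1.le, hs.2.le⟩
    have hF := hL s (α s) hsT
    have hβ : HasDerivWithinAt (fun r => ((r, α r) : ℝ × ℝ))
        ((1 : ℝ), charV γ u s (α s)) (Icc (0:ℝ) t) s :=
      (hasDerivAt_id s).hasDerivWithinAt.prodMk (hαd s hsIcc)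
    have hcomp := hF.comp_hasDerivWithinAt s hβ
    have h10 := hpartt s (α s) hsT
    have h01 := hpartx s (α s) hsT
    have hfl := hflux s (α s) hsT
    have hpd := hPDE s (α s) hsT
    rw [h10.deriv, hfl.deriv] at hpd
    have hsplit : (fderiv ℝ (Function.uncurry u) (s, α s)) (1, charV γ u s (α s))
        = (fderiv ℝ (Function.uncurry u) (s, α s)) (1, 0)
          + charV γ u s (α s) * (fderiv ℝ (Function.uncurry u) (s, α s)) (0, 1) := by
      have hxy : ((1:ℝ), charV γ u s (α s))
          = ((1:ℝ), (0:ℝ)) + charV γ u s (α s) • ((0:ℝ), (1:ℝ)) := by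
        simp [Prod.ext_iff]
      rw [hxy, map_add, map_smul, smul_eq_mul]
    have hval : (fderiv ℝ (Function.uncurry u) (s, α s)) (1, charV γ u s (α s))
        = u s (α s) * (1 - u s (α s)) *
          (Real.exp (-(ubar γ u s (α s))) * (1/γ * (u s (α s + γ) - u s (α s)))) := by
      rw [hsplit, ← h01.deriv]
      simp only [charV]
      linear_combination hpd
    have hmem : Icc (0:ℝ) t ∈ nhdsWithin s (Ici s) :=
      Filter.mem_of_superset (Icc_mem_nhdsGE_of_mem ⟨le_rfl, hs.2⟩)
        (Icc_subset_Icc hs.1.le le_rfl)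
    have hres := hcomp.mono_of_mem_nhdsWithin hmem
    rw [hval] at hres
    exact hres
  -- bounds along the characteristic
  have hφb : ∀ s ∈ Icc (0:ℝ) t, |u s (α s)| ≤ C := fun s hs => hCu s (hIsub hs) (α s)
  have hgb : ∀ s ∈ Icc (0:ℝ) t,
      |Real.exp (-(ubar γ u s (α s))) * (1/γ * (u s (α s + γ) - u s (α s)))|
        ≤ Real.exp C * (2*C/γ) := by
    intro s hs
    have hsI' : s ∈ Ico (0:ℝ) T' := hIsub hs
    have hU := abs_le.mp (hCu s hsI' (α s))
    have hUγ := abs_le.mp (hCu s hsI' (α s + γ))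
    have h3 : |1/γ * (u s (α s + γ) - u s (α s))| ≤ 2*C/γ := by
      rw [abs_mul, abs_of_pos (by positivity : (0:ℝ) < 1/γ)]
      have h4 : |u s (α s + γ) - u s (α s)| ≤ 2*C := abs_le.mpr ⟨by linarith, by linarith⟩
      calc 1/γ * |u s (α s + γ) - u s (α s)| ≤ 1/γ * (2*C) :=
            mul_le_mul_of_nonneg_left h4 (by positivity)
        _ = 2*C/γ := by ring
    rw [abs_mul, abs_of_pos (Real.exp_pos _)]
    exact mul_le_mul (hexpub s hsI' (α s)) h3 (abs_nonneg _) hE1.le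
  -- upper bound
  have hup : ∀ ε : ℝ, 0 < ε → ε ≤ t → u t x - 1 ≤
      ((Real.exp C * ((1 + 2*C)*C + C*(1+C)*(2*C/γ))) * ε) *
        Real.exp (((1+C) * (Real.exp C * (2*C/γ))) * (t - ε)) := by
    intro ε hε0 hεt
    have hεI : ε ∈ Icc (0:ℝ) t := ⟨hε0.le, hεt⟩
    have h0I : (0:ℝ) ∈ Icc (0:ℝ) t := ⟨le_rfl, ht0.le⟩
    have hstart : u ε (α ε) - 1 ≤ (Real.exp C * ((1 + 2*C)*C + C*(1+C)*(2*C/γ))) * ε := by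
      have h1 := hMt (α ε) 0 h0I ε hεI
      rw [show |ε - (0:ℝ)| = ε by rw [sub_zero, abs_of_pos hε0]] at h1
      have h2 := (hinit (α ε)).2
      have h3 := abs_le.mp h1
      linarith [h3.1]
    have hbound : ∀ s ∈ Ico ε t,
        |u s (α s) * (1 - u s (α s)) *
          (Real.exp (-(ubar γ u s (α s))) * (1/γ * (u s (α s + γ) - u s (α s))))|
        ≤ ((1+C) * (Real.exp C * (2*C/γ))) * |u s (α s) - 1| := by
      intro s hs
      have hsI : s ∈ Icc (0:ℝ) t := ⟨hε0.le.trans hs.1, hs.2.le⟩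
      have h1 := hφb s hsI
      have h2 := hgb s hsI
      calc |u s (α s) * (1 - u s (α s)) *
            (Real.exp (-(ubar γ u s (α s))) * (1/γ * (u s (α s + γ) - u s (α s))))|
          = |u s (α s)| * |1 - u s (α s)| *
            |Real.exp (-(ubar γ u s (α s))) * (1/γ * (u s (α s + γ) - u s (α s)))| := by
            rw [abs_mul, abs_mul]
        _ ≤ C * |1 - u s (α s)| * (Real.exp C * (2*C/γ)) := by gcongr
        _ = (C * (Real.exp C * (2*C/γ))) * |u s (α s) - 1| := by
            rw [abs_sub_comm]; ring
        _ ≤ ((1+C) * (Real.exp C * (2*C/γ))) * |u s (α s) - 1| := by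
            apply mul_le_mul_of_nonneg_right _ (abs_nonneg _)
            nlinarith
    have hcomp := gronwall_one_sided (w := fun s => u s (α s) - 1)
      (w' := fun s => u s (α s) * (1 - u s (α s)) *
        (Real.exp (-(ubar γ u s (α s))) * (1/γ * (u s (α s + γ) - u s (α s)))))
      hεt hK0
      ((hφC.mono (Icc_subset_Icc hε0.le le_rfl)).sub continuousOn_const)
      (fun s hs => ((hφd s ⟨lt_of_lt_of_le hε0 hs.1, hs.2⟩).sub_const 1))
      hbound hstart (mul_nonneg hM0 hε0.le)
    simpa [hα0] using hcomp
  -- lower bound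
  have hlo : ∀ ε : ℝ, 0 < ε → ε ≤ t → -u t x ≤
      ((Real.exp C * ((1 + 2*C)*C + C*(1+C)*(2*C/γ))) * ε) *
        Real.exp (((1+C) * (Real.exp C * (2*C/γ))) * (t - ε)) := by
    intro ε hε0 hεt
    have hεI : ε ∈ Icc (0:ℝ) t := ⟨hε0.le, hεt⟩
    have h0I : (0:ℝ) ∈ Icc (0:ℝ) t := ⟨le_rfl, ht0.le⟩
    have hstart : -u ε (α ε) ≤ (Real.exp C * ((1 + 2*C)*C + C*(1+C)*(2*C/γ))) * ε := by
      have h1 := hMt (α ε) 0 h0I ε hεI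
      rw [show |ε - (0:ℝ)| = ε by rw [sub_zero, abs_of_pos hε0]] at h1
      have h2 := (hinit (α ε)).1
      have h3 := abs_le.mp h1
      linarith [h3.1]
    have hbound : ∀ s ∈ Ico ε t,
        |-(u s (α s) * (1 - u s (α s)) *
          (Real.exp (-(ubar γ u s (α s))) * (1/γ * (u s (α s + γ) - u s (α s)))))|
        ≤ ((1+C) * (Real.exp C * (2*C/γ))) * |-u s (α s)| := by
      intro s hs
      have hsI : s ∈ Icc (0:ℝ) t := ⟨hε0.le.trans hs.1, hs.2.le⟩
      have h1 := hφb s hsI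
      have h2 := hgb s hsI
      have hU := abs_le.mp h1
      have h5 : |1 - u s (α s)| ≤ 1 + C := abs_le.mpr ⟨by linarith, by linarith⟩
      rw [abs_neg, abs_neg]
      calc |u s (α s) * (1 - u s (α s)) *
            (Real.exp (-(ubar γ u s (α s))) * (1/γ * (u s (α s + γ) - u s (α s))))|
          = |u s (α s)| * |1 - u s (α s)| *
            |Real.exp (-(ubar γ u s (α s))) * (1/γ * (u s (α s + γ) - u s (α s)))| := by
            rw [abs_mul, abs_mul]
        _ ≤ |u s (α s)| * (1 + C) * (Real.exp C * (2*C/γ)) := by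
            gcongr
        _ = ((1+C) * (Real.exp C * (2*C/γ))) * |u s (α s)| := by ring
    have hcomp := gronwall_one_sided (w := fun s => -u s (α s))
      (w' := fun s => -(u s (α s) * (1 - u s (α s)) *
        (Real.exp (-(ubar γ u s (α s))) * (1/γ * (u s (α s + γ) - u s (α s))))))
      hεt hK0
      ((hφC.mono (Icc_subset_Icc hε0.le le_rfl)).neg)
      (fun s hs => ((hφd s ⟨lt_of_lt_of_le hε0 hs.1, hs.2⟩).neg))
      hbound hstart (mul_nonneg hM0 hε0.le)
    simpa [hα0] using hcomp
  -- pass to the limit ε → 0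
  have hfinal : ∀ ε : ℝ, 0 < ε → ε ≤ t →
      ((Real.exp C * ((1 + 2*C)*C + C*(1+C)*(2*C/γ))) * ε) *
        Real.exp (((1+C) * (Real.exp C * (2*C/γ))) * (t - ε))
      ≤ ((Real.exp C * ((1 + 2*C)*C + C*(1+C)*(2*C/γ))) *
          Real.exp (((1+C) * (Real.exp C * (2*C/γ))) * t)) * ε := by
    intro ε hε0 hεt
    have hexp : Real.exp (((1+C) * (Real.exp C * (2*C/γ))) * (t - ε))
        ≤ Real.exp (((1+C) * (Real.exp C * (2*C/γ))) * t) := by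
      apply Real.exp_le_exp.mpr
      nlinarith
    calc ((Real.exp C * ((1 + 2*C)*C + C*(1+C)*(2*C/γ))) * ε) *
          Real.exp (((1+C) * (Real.exp C * (2*C/γ))) * (t - ε))
        ≤ ((Real.exp C * ((1 + 2*C)*C + C*(1+C)*(2*C/γ))) * ε) *
          Real.exp (((1+C) * (Real.exp C * (2*C/γ))) * t) :=
          mul_le_mul_of_nonneg_left hexp (mul_nonneg hM0 hε0.le)
      _ = ((Real.exp C * ((1 + 2*C)*C + C*(1+C)*(2*C/γ))) *
          Real.exp (((1+C) * (Real.exp C * (2*C/γ))) * t)) * ε := by ring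
  have hcpos : (0:ℝ) ≤ (Real.exp C * ((1 + 2*C)*C + C*(1+C)*(2*C/γ))) *
      Real.exp (((1+C) * (Real.exp C * (2*C/γ))) * t) := mul_nonneg hM0 (Real.exp_pos _).le
  constructor
  · have := le_zero_of_forall_le_mul ht0 hcpos
      (fun ε h1 h2 => (hlo ε h1 h2).trans (hfinal ε h1 h2))
    linarith
  · have := le_zero_of_forall_le_mul ht0 hcpos
      (fun ε h1 h2 => (hup ε h1 h2).trans (hfinal ε h1 h2))
    linarith
end
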